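/- arXiv:2508.12700 — 3 statements merged into one kernel-verified Lean document; each statement's English description precedes it below -/
import Mathlib

section
/- Let ε > 0, n ≥ 2, k ≥ 1, r₀ ∈ (0,1/2), and let h ∈ C([0,1]) ∩ C^{2,1}((0,1]) be the unique solution of h''(r) + b(r) h'(r) − (k(k+n−3)/r²) h(r) = 0 on (0,1) with h(0) = 0, h(1) = 1, where b(r) = (n−2)/r + 2(r−r₀)₊/(ε + (r−r₀)₊²). Then |h'(r)| ≤ C for all 0 < r < 1, where C > 0 depends only on n, k, and r₀ (in particular C is independent of ε). -/
open Set Filter Topology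

private lemma slope_pos_right {V : ℝ → ℝ} {ρ d b : ℝ} (hV : HasDerivAt V d ρ) (hV0 : V ρ = 0)
    (hd : 0 < d) (hb : ρ < b) :
    ∃ σ, ρ < σ ∧ σ < b ∧ ∀ x ∈ Ioo ρ σ, 0 < V x := by
  have h1 : Tendsto (slope V ρ) (𝓝[>] ρ) (𝓝 d) :=
    (hasDerivAt_iff_tendsto_slope.mp hV).mono_left
      (nhdsWithin_mono _ (fun x hx => ne_of_gt hx))
  have h2 : {x | 0 < slope V ρ x} ∈ 𝓝[>] ρ := h1.eventually (eventually_gt_nhds hd)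
  obtain ⟨u, hu, hsub⟩ := mem_nhdsGT_iff_exists_Ioo_subset.mp h2
  have hmin : ρ < min u b := lt_min (mem_Ioi.mp hu) hb
  refine ⟨(ρ + min u b)/2, by linarith, by linarith [min_le_right u b], ?_⟩
  intro x hx
  have hxu : x ∈ Ioo ρ u := ⟨hx.1, by cases' hx with h1' h2'; linarith [min_le_left u b]⟩
  have := hsub hxu
  rw [mem_setOf_eq, slope_def_field, hV0, sub_zero] at this
  have hxρ : 0 < x - ρ := by linarith [hx.1]
  calc (0:ℝ) = 0 * (x - ρ) := by ring
  _ < (V x / (x - ρ)) * (x - ρ) := by exact mul_lt_mul_of_pos_right this hxρ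
  _ = V x := by field_simp

private lemma engine {a b : ℝ} (hab : a < b) {w u ν V q : ℝ → ℝ} {M : ℝ}
    (hw : ContinuousOn w (Icc a b))
    (hu : ∀ r ∈ Ioo a b, HasDerivAt w (u r) r)
    (hν : ∀ r ∈ Ioo a b, 0 < ν r)
    (hVdef : ∀ r ∈ Ioo a b, V r = ν r * u r)
    (hV' : ∀ r ∈ Ioo a b, HasDerivAt V (q r * w r) r)
    (hq : ∀ r ∈ Ioo a b, 0 < q r)
    (hM : 0 ≤ M) (hwa : w a ≤ M) (hwb : w b ≤ M) :
    ∀ r ∈ Icc a b, w r ≤ M := by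
  by_contra hcon
  push_neg at hcon
  obtain ⟨r1, hr1, hr1M⟩ := hcon
  obtain ⟨ρ, hρmem, hρmax⟩ :=
    (isCompact_Icc).exists_isMaxOn ⟨a, left_mem_Icc.mpr hab.le⟩ hw
  have hMρ : M < w ρ := lt_of_lt_of_le hr1M (hρmax hr1)
  have hρIoo : ρ ∈ Ioo a b := by
    constructor
    · rcases eq_or_lt_of_le hρmem.1 with h | h
      · exact absurd (h ▸ hwa) (not_le.mpr hMρ)
      · exact h
    · rcases eq_or_lt_of_le hρmem.2 with h | h
      · exact absurd (h ▸ hwb) (not_le.mpr hMρ)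
      · exact h
  have hloc : IsLocalMax w ρ := hρmax.isLocalMax (Icc_mem_nhds hρIoo.1 hρIoo.2)
  have huρ : u ρ = 0 := by rw [← (hu ρ hρIoo).deriv]; exact hloc.deriv_eq_zero
  have hVρ : V ρ = 0 := by rw [hVdef ρ hρIoo, huρ, mul_zero]
  have hd : 0 < q ρ * w ρ := mul_pos (hq ρ hρIoo) (lt_of_le_of_lt hM hMρ)
  obtain ⟨σ, hρσ, hσb, hVpos⟩ := slope_pos_right (hV' ρ hρIoo) hVρ hd hρIoo.2
  have hmono : StrictMonoOn w (Icc ρ σ) := by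
    apply strictMonoOn_of_deriv_pos (convex_Icc _ _)
    · exact hw.mono (Icc_subset_Icc hρmem.1 hσb.le)
    · intro x hx
      rw [interior_Icc] at hx
      have hxIoo : x ∈ Ioo a b := ⟨lt_trans hρIoo.1 hx.1, lt_trans hx.2 hσb⟩
      rw [(hu x hxIoo).deriv]
      have h0 : 0 < ν x * u x := (hVdef x hxIoo) ▸ hVpos x hx
      nlinarith [hν x hxIoo]
  have hle : w σ ≤ w ρ := hρmax ⟨le_trans hρmem.1 hρσ.le, hσb.le⟩
  exact absurd (hmono (left_mem_Icc.mpr hρσ.le) (right_mem_Icc.mpr hρσ.le) hρσ)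
    (not_lt.mpr hle)

private lemma engine_min {a b : ℝ} (hab : a < b) {w u ν V q : ℝ → ℝ} {m : ℝ}
    (hw : ContinuousOn w (Icc a b))
    (hu : ∀ r ∈ Ioo a b, HasDerivAt w (u r) r)
    (hν : ∀ r ∈ Ioo a b, 0 < ν r)
    (hVdef : ∀ r ∈ Ioo a b, V r = ν r * u r)
    (hV' : ∀ r ∈ Ioo a b, HasDerivAt V (q r * w r) r)
    (hq : ∀ r ∈ Ioo a b, 0 < q r)
    (hm : m ≤ 0) (hwa : m ≤ w a) (hwb : m ≤ w b) :
    ∀ r ∈ Icc a b, m ≤ w r := by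
  have := engine hab (w := fun x => -w x) (u := fun x => -u x) (ν := ν)
    (V := fun x => -V x) (q := q) (M := -m)
    (hw.neg) (fun r hr => (hu r hr).neg) hν
    (fun r hr => by simp only [hVdef r hr]; ring)
    (fun r hr => by simpa using (hV' r hr).fun_neg) hq (by linarith) (by simpa) (by simpa)
  intro r hr
  have h2 := this r hr
  linarith

private lemma hasDerivAt_maxsq (r₀ a : ℝ) :
    HasDerivAt (fun x => max (x - r₀) 0 ^ 2) (2 * max (a - r₀) 0) a := by
  rcases lt_trichotomy a r₀ with h | h | h
  · have heq : (fun x : ℝ => max (x - r₀) 0 ^ 2) =ᶠ[𝓝 a] fun _ => (0:ℝ) := by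
      filter_upwards [Iio_mem_nhds h] with x hx
      rw [max_eq_right (by simp at hx; linarith)]
      norm_num
    have : HasDerivAt (fun _ : ℝ => (0:ℝ)) 0 a := hasDerivAt_const a 0
    have := this.congr_of_eventuallyEq heq
    refine this.congr_deriv ?_
    rw [max_eq_right (by linarith)]
    ring
  · subst h
    have hsq : HasDerivAt (fun x : ℝ => (x - a) ^ 2) 0 a := by
      have := ((hasDerivAt_id a).sub_const a).fun_pow 2
      simpa using this
    have hlo : (fun x : ℝ => max (x - a) 0 ^ 2) =o[𝓝 a] fun x => x - a := by
      have h1 : (fun x : ℝ => (x - a) ^ 2) =o[𝓝 a] fun x => x - a := by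
        have := hasDerivAt_iff_isLittleO.mp hsq
        simpa using this
      refine (Asymptotics.isBigO_of_le _ ?_).trans_isLittleO h1
      intro x
      simp only [norm_pow, Real.norm_eq_abs]
      have h2 : |max (x - a) 0| ≤ |x - a| := by
        rcases le_total (x - a) 0 with h' | h'
        · rw [max_eq_right h']; simp [abs_nonneg]
        · rw [max_eq_left h']
      exact pow_le_pow_left₀ (abs_nonneg _) h2 2
    rw [hasDerivAt_iff_isLittleO]
    simp only [sub_self, max_self, mul_zero, zero_pow, smul_zero, sub_zero]
    convert hlo using 2 <;> norm_num <;> rfl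
  · have heq : (fun x : ℝ => max (x - r₀) 0 ^ 2) =ᶠ[𝓝 a] fun x => (x - r₀) ^ 2 := by
      filter_upwards [Ioi_mem_nhds h] with x hx
      rw [max_eq_left (by simp at hx; linarith)]
    have : HasDerivAt (fun x : ℝ => (x - r₀) ^ 2) (2 * (a - r₀)) a := by
      have := ((hasDerivAt_id a).sub_const r₀).fun_pow 2
      simpa using this
    have := this.congr_of_eventuallyEq heq
    refine this.congr_deriv ?_
    rw [max_eq_left (by linarith)]

private lemma cast_pow_helper {m : ℕ} {r : ℝ} (hr : r ≠ 0) :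
    (m:ℝ) * r^(m-1) * r = (m:ℝ) * r^m := by
  cases m with
  | zero => simp
  | succ mm => simp only [Nat.add_sub_cancel]; rw [mul_assoc, ← pow_succ]

private lemma const_of_deriv_zero {f : ℝ → ℝ} {a b : ℝ} (hab : a ≤ b)
    (hc : ContinuousOn f (Icc a b)) (hd : ∀ x ∈ Ioo a b, HasDerivAt f 0 x) :
    f b = f a := by
  have hdiff : DifferentiableOn ℝ f (interior (Icc a b)) := by
    rw [interior_Icc]; exact fun x hx => (hd x hx).differentiableAt.differentiableWithinAt
  have h1 := monotoneOn_of_deriv_nonneg (convex_Icc a b) hc hdiff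
    (fun x hx => by rw [interior_Icc] at hx; rw [(hd x hx).deriv])
  have h2 := antitoneOn_of_deriv_nonpos (convex_Icc a b) hc hdiff
    (fun x hx => by rw [interior_Icc] at hx; rw [(hd x hx).deriv])
  exact le_antisymm (h2 (left_mem_Icc.mpr hab) (right_mem_Icc.mpr hab) hab)
    (h1 (left_mem_Icc.mpr hab) (right_mem_Icc.mpr hab) hab)


/-- The coefficient `b(r) = (n−2)/r + 2(r−r₀)₊/(ε + (r−r₀)₊²)`. -/
noncomputable def bCoeff (n : ℕ) (r₀ ε r : ℝ) : ℝ :=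
  ((n : ℝ) - 2)/r + 2 * max (r - r₀) 0 / (ε + max (r - r₀) 0 ^ 2)

/-- `h` is a solution of `h'' + b h' − (k(k+n−3)/r²) h = 0` on `(0,1)` with `h(0) = 0`,
`h(1) = 1`, belonging to `C([0,1]) ∩ C^{2,1}((0,1])` (derivatives are taken within
`(0,1]`, and the second derivative is locally Lipschitz on `(0,1]`). -/
def IsSolODE (n k : ℕ) (r₀ ε : ℝ) (h : ℝ → ℝ) : Prop :=
  ContinuousOn h (Icc 0 1) ∧ h 0 = 0 ∧ h 1 = 1 ∧
  (∀ r ∈ Ioc (0:ℝ) 1, DifferentiableWithinAt ℝ h (Ioc 0 1) r) ∧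
  (∀ r ∈ Ioc (0:ℝ) 1,
    DifferentiableWithinAt ℝ (derivWithin h (Ioc 0 1)) (Ioc 0 1) r) ∧
  ContinuousOn (derivWithin (derivWithin h (Ioc 0 1)) (Ioc 0 1)) (Ioc 0 1) ∧
  LocallyLipschitzOn (Ioc 0 1) (derivWithin (derivWithin h (Ioc 0 1)) (Ioc 0 1)) ∧
  (∀ r ∈ Ioo (0:ℝ) 1,
    derivWithin (derivWithin h (Ioc 0 1)) (Ioc 0 1) r +
      bCoeff n r₀ ε r * derivWithin h (Ioc 0 1) r -
      ((k : ℝ) * ((k : ℝ) + (n : ℝ) - 3) / r ^ 2) * h r = 0)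

set_option maxHeartbeats 2000000 in
/-- Let `h` be the solution of the ODE from Lemma 3.1 (degree `k ≥ 1`).
Then `|h'(r)| ≤ C` on `(0,1)`, where `C > 0` depends only on `n`, `k`, `r₀`
(in particular, `C` is independent of `ε`). -/
theorem stmt10 (n k : ℕ) (hn : 2 ≤ n) (hk : 1 ≤ k) (r₀ : ℝ)
    (hr₀ : r₀ ∈ Ioo (0:ℝ) (1/2)) :
    ∃ C : ℝ, 0 < C ∧
      ∀ ε : ℝ, 0 < ε → ∀ h : ℝ → ℝ, IsSolODE n k r₀ ε h →
        ∀ r ∈ Ioo (0:ℝ) 1, |derivWithin h (Ioc 0 1) r| ≤ C := by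
  obtain ⟨hr₀0, hr₀half⟩ := hr₀
  have hr₀1 : r₀ < 1 := by linarith
  have hr₀ne : r₀ ≠ 0 := ne_of_gt hr₀0
  obtain ⟨m, rfl⟩ : ∃ m, n = m + 2 := ⟨n - 2, by omega⟩
  obtain ⟨j, rfl⟩ : ∃ j, k = j + 1 := ⟨k - 1, by omega⟩
  set cR : ℝ := ((j:ℝ) + 1) * ((j:ℝ) + (m:ℝ)) with hcRdef
  have hcR0 : 0 ≤ cR := by positivity
  clear_value cR
  set N : ℕ := m + 2 + (j + 1) with hNdef
  set C : ℝ := ((j:ℝ) + 1 + 2*cR + 2) / r₀ ^ N with hCdef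
  have hrpowN : 0 < r₀ ^ N := pow_pos hr₀0 N
  have hC0 : 0 < C := div_pos (by linarith [Nat.cast_nonneg (α:=ℝ) j]) hrpowN
  clear_value N C
  refine ⟨C, hC0, ?_⟩
  intro ε hε h hsol r hrIoo
  obtain ⟨hcont, h0, h1, hdiff1, hdiff2, hcont2, _, hode⟩ := hsol
  set g := derivWithin h (Ioc (0:ℝ) 1) with hgdef
  set g2 := derivWithin g (Ioc (0:ℝ) 1) with hg2def
  have hmem : ∀ x ∈ Ioo (0:ℝ) 1, Ioc (0:ℝ) 1 ∈ 𝓝 x := fun x hx => Ioc_mem_nhds hx.1 hx.2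
  have hgat : ∀ x ∈ Ioo (0:ℝ) 1, HasDerivAt h (g x) x := by
    intro x hx
    have hd := (hdiff1 x (Ioo_subset_Ioc_self hx)).differentiableAt (hmem x hx)
    rw [hgdef, derivWithin_of_mem_nhds (hmem x hx)]
    exact hd.hasDerivAt
  have hg2at : ∀ x ∈ Ioo (0:ℝ) 1, HasDerivAt g (g2 x) x := by
    intro x hx
    have hd := (hdiff2 x (Ioo_subset_Ioc_self hx)).differentiableAt (hmem x hx)
    rw [hg2def, derivWithin_of_mem_nhds (hmem x hx)]
    exact hd.hasDerivAt
  have hodeeq : ∀ x ∈ Ioo (0:ℝ) 1,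
      g2 x = cR / x^2 * h x - bCoeff (m+2) r₀ ε x * g x := by
    intro x hx
    have he := hode x hx
    push_cast at he
    rw [hcRdef]
    linear_combination he
  set μ : ℝ → ℝ := fun x => x^m * (ε + max (x - r₀) 0 ^ 2) with hμdef
  have hμpos : ∀ x : ℝ, 0 < x → 0 < μ x := by
    intro x hx
    have h1 : (0:ℝ) ≤ max (x - r₀) 0 := le_max_right _ _
    positivity
  have hμat : ∀ x ∈ Ioo (0:ℝ) 1, HasDerivAt μ (bCoeff (m+2) r₀ ε x * μ x) x := by
    intro x hx
    have hx0 : x ≠ 0 := ne_of_gt hx.1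
    have h1 : HasDerivAt (fun y:ℝ => y^m) ((m:ℝ)*x^(m-1)) x := hasDerivAt_pow m x
    have h2 : HasDerivAt (fun y:ℝ => ε + max (y - r₀) 0 ^ 2) (2*max (x-r₀) 0) x :=
      (hasDerivAt_maxsq r₀ x).const_add ε
    have h3 := h1.mul h2
    refine h3.congr_deriv ?_
    have hden : 0 < ε + max (x - r₀) 0 ^ 2 := by
      have := le_max_right (x - r₀) 0; positivity
    have key : (m:ℝ) * x^(m-1) = (m:ℝ)*x^m/x := by
      rw [eq_div_iff hx0]; exact cast_pow_helper hx0
    rw [key]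
    unfold bCoeff
    push_cast
    field_simp
    ring
  set G : ℝ → ℝ := fun x => μ x * g x with hGdef
  have hGat : ∀ x ∈ Ioo (0:ℝ) 1, HasDerivAt G (cR * μ x * h x / x^2) x := by
    intro x hx
    have hprod := (hμat x hx).mul (hg2at x hx)
    refine hprod.congr_deriv ?_
    rw [hodeeq x hx]
    ring
  have hGcont : ContinuousOn G (Ioo (0:ℝ) 1) :=
    fun x hx => ((hGat x hx).differentiableAt.continuousAt).continuousWithinAt
  have hGdiff : DifferentiableOn ℝ G (Ioo (0:ℝ) 1) :=
    fun x hx => (hGat x hx).differentiableAt.differentiableWithinAt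
  have hr₀Ioo : r₀ ∈ Ioo (0:ℝ) 1 := ⟨hr₀0, hr₀1⟩
  clear_value g g2 μ G
  by_cases hjm : j + m = 0
  · -- degenerate case c = 0 (n = 2, k = 1)
    have hj0 : j = 0 := by omega
    have hm0 : m = 0 := by omega
    have hcRz : cR = 0 := by rw [hcRdef, hj0, hm0]; norm_num
    have hG'0 : ∀ x ∈ Ioo (0:ℝ) 1, HasDerivAt G 0 x := by
      intro x hx
      have := hGat x hx
      rw [hcRz] at this
      simpa using this
    have hGconst : ∀ x ∈ Ioo (0:ℝ) 1, G x = G r₀ := by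
      intro x hx
      rcases le_total x r₀ with hle | hle
      · have hsub : Icc x r₀ ⊆ Ioo (0:ℝ) 1 := fun y hy => ⟨lt_of_lt_of_le hx.1 hy.1, lt_of_le_of_lt hy.2 hr₀1⟩
        exact (const_of_deriv_zero hle (hGcont.mono hsub)
          (fun y hy => hG'0 y (hsub (Ioo_subset_Icc_self hy)))).symm
      · have hsub : Icc r₀ x ⊆ Ioo (0:ℝ) 1 := fun y hy => ⟨lt_of_lt_of_le hr₀0 hy.1, lt_of_le_of_lt hy.2 hx.2⟩
        exact const_of_deriv_zero hle (hGcont.mono hsub)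
          (fun y hy => hG'0 y (hsub (Ioo_subset_Icc_self hy)))
    set K : ℝ := G r₀ with hKdef
    have hgK : ∀ x ∈ Ioo (0:ℝ) 1, g x = K / μ x := by
      intro x hx
      rw [eq_div_iff (ne_of_gt (hμpos x hx.1)), mul_comm]
      have h' := hGconst x hx
      rw [hGdef] at h'
      simpa using h'
    have hK0 : 0 ≤ K := by
      by_contra hneg
      push_neg at hneg
      have hanti : StrictAntiOn h (Icc (0:ℝ) 1) := by
        apply strictAntiOn_of_deriv_neg (convex_Icc 0 1) hcont
        intro x hx
        rw [interior_Icc] at hx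
        rw [(hgat x hx).deriv, hgK x hx]
        exact div_neg_of_neg_of_pos hneg (hμpos x hx.1)
      have := hanti (left_mem_Icc.mpr zero_le_one) (right_mem_Icc.mpr zero_le_one) zero_lt_one
      rw [h0, h1] at this
      linarith
    have hμε : ∀ x : ℝ, x ≤ r₀ → μ x = ε := by
      intro x hxr
      simp only [hμdef, hm0, pow_zero, one_mul]
      rw [max_eq_right (by linarith : x - r₀ ≤ 0)]
      norm_num
    have hhmono : MonotoneOn h (Icc (0:ℝ) 1) := by
      apply monotoneOn_of_deriv_nonneg (convex_Icc 0 1) hcont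
      · rw [interior_Icc]
        exact fun x hx => (hgat x hx).differentiableAt.differentiableWithinAt
      · intro x hx
        rw [interior_Icc] at hx
        rw [(hgat x hx).deriv, hgK x hx]
        exact div_nonneg hK0 (hμpos x hx.1).le
    have hLconst : h r₀ - K/ε * r₀ = h (r₀/2) - K/ε * (r₀/2) := by
      have hc : ContinuousOn (fun y => h y - K/ε * y) (Icc (r₀/2) r₀) := by
        apply ContinuousOn.sub
        · exact hcont.mono (Icc_subset_Icc (by linarith) hr₀1.le)
        · exact (Continuous.continuousOn (by fun_prop))
      have hd : ∀ x ∈ Ioo (r₀/2) r₀, HasDerivAt (fun y => h y - K/ε * y) 0 x := by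
        intro x hx
        have hxI : x ∈ Ioo (0:ℝ) 1 := ⟨by linarith [hx.1], by linarith [hx.2]⟩
        have := (hgat x hxI).sub (HasDerivAt.const_mul (K/ε) (hasDerivAt_id x))
        refine this.congr_deriv ?_
        rw [hgK x hxI, hμε x hx.2.le]
        ring
      have := const_of_deriv_zero (by linarith : r₀/2 ≤ r₀) hc hd
      simpa using this
    have hKε : K/ε * (r₀/2) ≤ 1 := by
      have e1 : h r₀ ≤ 1 := by
        have hm1 : r₀ ∈ Icc (0:ℝ) 1 := ⟨hr₀0.le, hr₀1.le⟩
        have := hhmono hm1 (right_mem_Icc.mpr zero_le_one) hr₀1.le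
        rwa [h1] at this
      have e2 : 0 ≤ h (r₀/2) := by
        have hm2 : r₀/2 ∈ Icc (0:ℝ) 1 := ⟨by linarith, by linarith⟩
        have := hhmono (left_mem_Icc.mpr zero_le_one) hm2 (by linarith)
        rwa [h0] at this
      have e3 : h r₀ - h (r₀/2) = K/ε * (r₀/2) := by linarith [hLconst]
      linarith
    have hgr := hgK r hrIoo
    have hμger : ε ≤ μ r := by
      simp only [hμdef, hm0, pow_zero, one_mul]
      nlinarith [sq_nonneg (max (r-r₀) 0)]
    have hgnn : 0 ≤ g r := by rw [hgr]; exact div_nonneg hK0 (hμpos r hrIoo.1).le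
    have hgle : g r ≤ 2/r₀ := by
      have hstep : K / μ r ≤ K / ε := div_le_div_of_nonneg_left hK0 hε hμger
      have hstep2 : K / ε ≤ 2/r₀ := by
        rw [div_le_div_iff₀ hε hr₀0]
        have hrw : K = K/ε*ε := by field_simp
        nlinarith [hKε, hε, hr₀0, hrw]
      rw [hgr]
      linarith
    rw [abs_of_nonneg hgnn]
    refine le_trans hgle ?_
    rw [hCdef]
    have hpow_le : r₀ ^ N ≤ r₀ := pow_le_of_le_one hr₀0.le (by linarith) (by omega)
    exact div_le_div₀ (by positivity) (by linarith [hcR0, Nat.cast_nonneg (α:=ℝ) j]) hrpowN hpow_le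
  · -- main case c > 0
    have hjm1 : 1 ≤ j + m := by omega
    have hcRpos : 0 < cR := by
      rw [hcRdef]
      have h1' : (1:ℝ) ≤ (j:ℝ) + (m:ℝ) := by exact_mod_cast Nat.one_le_cast.mpr hjm1
      nlinarith [Nat.cast_nonneg (α := ℝ) j]
    have hVdefG : ∀ x ∈ Ioo (0:ℝ) 1, G x = μ x * g x := fun x _ => by simp only [hGdef]
    have hV'G : ∀ x ∈ Ioo (0:ℝ) 1, HasDerivAt G ((cR * μ x / x^2) * h x) x := by
      intro x hx
      have := hGat x hx
      convert this using 1
      ring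
    have hqposG : ∀ x ∈ Ioo (0:ℝ) 1, 0 < cR * μ x / x^2 := fun x hx =>
      div_pos (mul_pos hcRpos (hμpos x hx.1)) (pow_pos hx.1 2)
    have hle1 : ∀ x ∈ Icc (0:ℝ) 1, h x ≤ 1 :=
      engine (w := h) (u := g) (ν := μ) (V := G) (q := fun x => cR * μ x / x^2) (M := 1)
        zero_lt_one hcont hgat (fun x hx => hμpos x hx.1) hVdefG hV'G hqposG
        zero_le_one (by rw [h0]; norm_num) (by rw [h1])
    have hge0 : ∀ x ∈ Icc (0:ℝ) 1, 0 ≤ h x :=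
      engine_min (w := h) (u := g) (ν := μ) (V := G) (q := fun x => cR * μ x / x^2) (m := 0)
        zero_lt_one hcont hgat (fun x hx => hμpos x hx.1) hVdefG hV'G hqposG
        le_rfl (by rw [h0]) (by rw [h1]; norm_num)
    have hGmono : MonotoneOn G (Ioo (0:ℝ) 1) := by
      apply monotoneOn_of_deriv_nonneg (convex_Ioo 0 1) hGcont
        (by rw [interior_Ioo]; exact hGdiff)
      intro x hx
      rw [interior_Ioo] at hx
      rw [(hGat x hx).deriv]
      have h1' := hge0 x (Ioo_subset_Icc_self hx)
      have h2' := (hμpos x hx.1).le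
      exact div_nonneg (mul_nonneg (mul_nonneg hcR0 h2') h1') (pow_nonneg hx.1.le 2)
    have hgnn : ∀ x ∈ Ioo (0:ℝ) 1, 0 ≤ g x := by
      intro ρ hρ
      by_contra hneg
      push_neg at hneg
      have hGρ : G ρ < 0 := by
        simp only [hGdef]
        exact mul_neg_of_pos_of_neg (hμpos ρ hρ.1) hneg
      have hanti : StrictAntiOn h (Icc 0 ρ) := by
        apply strictAntiOn_of_deriv_neg (convex_Icc 0 ρ)
          (hcont.mono (Icc_subset_Icc le_rfl hρ.2.le))
        intro x hx
        rw [interior_Icc] at hx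
        have hxI : x ∈ Ioo (0:ℝ) 1 := ⟨hx.1, lt_trans hx.2 hρ.2⟩
        rw [(hgat x hxI).deriv]
        have hGx : G x ≤ G ρ := hGmono hxI hρ hx.2.le
        have hGx' : μ x * g x < 0 := by
          have : G x < 0 := lt_of_le_of_lt hGx hGρ
          simpa [hGdef] using this
        have hμx := hμpos x hx.1
        nlinarith
      have h2' := hanti (left_mem_Icc.mpr hρ.1.le) (right_mem_Icc.mpr hρ.1.le) hρ.1
      rw [h0] at h2'
      have := hge0 ρ ⟨hρ.1.le, hρ.2.le⟩
      linarith
    -- inner representation h = A x^(j+1) on (0, r₀]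
    set A : ℝ := h r₀ / r₀^(j+1) with hAdef
    have hr₀pow : (0:ℝ) < r₀^(j+1) := pow_pos hr₀0 _
    have hAr₀ : A * r₀^(j+1) = h r₀ := div_mul_cancel₀ _ (ne_of_gt hr₀pow)
    have hA0 : 0 ≤ A := div_nonneg (hge0 r₀ ⟨hr₀0.le, hr₀1.le⟩) hr₀pow.le
    have hA1 : A * r₀^(j+1) ≤ 1 := by rw [hAr₀]; exact hle1 r₀ ⟨hr₀0.le, hr₀1.le⟩
    have hbinner : ∀ x : ℝ, 0 < x → x < r₀ → bCoeff (m+2) r₀ ε x = (m:ℝ)/x := by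
      intro x hx hxr
      unfold bCoeff
      rw [max_eq_right (by linarith : x - r₀ ≤ 0)]
      push_cast
      norm_num
    have hsubIcc : Icc (0:ℝ) r₀ ⊆ Icc 0 1 := Icc_subset_Icc le_rfl hr₀1.le
    have hIoosub : Ioo (0:ℝ) r₀ ⊆ Ioo 0 1 := Ioo_subset_Ioo le_rfl hr₀1.le
    have hwcont : ContinuousOn (fun x => h x - A * x^(j+1)) (Icc 0 r₀) :=
      (hcont.mono hsubIcc).sub (continuous_const.mul (continuous_pow (j+1))).continuousOn
    have hφat : ∀ x : ℝ, HasDerivAt (fun y:ℝ => A * y^(j+1)) (A*((j:ℝ)+1)*x^j) x := by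
      intro x
      have := (hasDerivAt_pow (j+1) x).const_mul A
      refine this.congr_deriv ?_
      push_cast [Nat.add_sub_cancel]
      ring
    have huat : ∀ x ∈ Ioo (0:ℝ) r₀,
        HasDerivAt (fun y => h y - A * y^(j+1)) (g x - A*((j:ℝ)+1)*x^j) x :=
      fun x hx => (hgat x (hIoosub hx)).sub (hφat x)
    have hVat : ∀ x ∈ Ioo (0:ℝ) r₀,
        HasDerivAt (fun y => y^m * (g y - A*((j:ℝ)+1)*y^j))
          ((cR * x^m / x^2) * (h x - A * x^(j+1))) x := by
      intro x hx
      have hxI := hIoosub hx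
      have hx0 : x ≠ 0 := ne_of_gt hx.1
      have hψ : HasDerivAt (fun y:ℝ => g y - A*((j:ℝ)+1)*y^j)
          (g2 x - A*((j:ℝ)+1)*((j:ℝ)*x^(j-1))) x :=
        (hg2at x hxI).sub ((hasDerivAt_pow j x).const_mul (A*((j:ℝ)+1)))
      have hprod := (hasDerivAt_pow m x).mul hψ
      refine hprod.congr_deriv ?_
      rw [hodeeq x hxI, hbinner x hx.1 hx.2]
      have k1 : (m:ℝ) * x^(m-1) = (m:ℝ)*x^m/x := by
        rw [eq_div_iff hx0]; exact cast_pow_helper hx0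
      have k2 : (j:ℝ) * x^(j-1) = (j:ℝ)*x^j/x := by
        rw [eq_div_iff hx0]; exact cast_pow_helper hx0
      rw [k1, k2, hcRdef]
      field_simp
      ring
    have hqposI : ∀ x ∈ Ioo (0:ℝ) r₀, 0 < cR * x^m / x^2 := fun x hx =>
      div_pos (mul_pos hcRpos (pow_pos hx.1 m)) (pow_pos hx.1 2)
    have hνposI : ∀ x ∈ Ioo (0:ℝ) r₀, 0 < x^m := fun x hx => pow_pos hx.1 m
    have hw0 : h 0 - A * 0^(j+1) = 0 := by
      rw [h0, zero_pow (Nat.succ_ne_zero j)]; ring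
    have hwr₀ : h r₀ - A * r₀^(j+1) = 0 := by rw [hAr₀]; ring
    have hwzero : ∀ x ∈ Icc (0:ℝ) r₀, h x = A * x^(j+1) := by
      intro x hx
      have hup := engine (M := 0) hr₀0 hwcont huat hνposI (fun x _ => rfl) hVat hqposI
        le_rfl (le_of_eq hw0) (le_of_eq hwr₀)
      have hlo := engine_min (m := 0) hr₀0 hwcont huat hνposI (fun x _ => rfl) hVat hqposI
        le_rfl (ge_of_eq hw0) (ge_of_eq hwr₀)
      have := le_antisymm (hup x hx) (hlo x hx)
      linarith
    have ginner : ∀ x ∈ Ioo (0:ℝ) r₀, g x = A*((j:ℝ)+1)*x^j := by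
      intro x hx
      have heq : h =ᶠ[𝓝 x] fun y => A * y^(j+1) := by
        filter_upwards [Ioo_mem_nhds hx.1 hx.2] with y hy
        exact hwzero y (Ioo_subset_Icc_self hy)
      exact (hgat x (hIoosub hx)).unique ((hφat x).congr_of_eventuallyEq heq)
    have hgr₀ : g r₀ = A*((j:ℝ)+1)*r₀^j := by
      have hNB : (𝓝[Ioo (0:ℝ) r₀] r₀).NeBot := by
        apply mem_closure_iff_nhdsWithin_neBot.mp
        rw [closure_Ioo hr₀ne.symm]
        exact ⟨hr₀0.le, le_refl r₀⟩
      have t1 : Tendsto g (𝓝[Ioo (0:ℝ) r₀] r₀) (𝓝 (g r₀)) :=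
        ((hg2at r₀ hr₀Ioo).differentiableAt.continuousAt).tendsto.mono_left nhdsWithin_le_nhds
      have t2 : Tendsto g (𝓝[Ioo (0:ℝ) r₀] r₀) (𝓝 (A*((j:ℝ)+1)*r₀^j)) := by
        have tφ : Tendsto (fun y:ℝ => A*((j:ℝ)+1)*y^j) (𝓝[Ioo (0:ℝ) r₀] r₀)
            (𝓝 (A*((j:ℝ)+1)*r₀^j)) :=
          ((continuous_const.mul (continuous_pow j)).tendsto r₀).mono_left nhdsWithin_le_nhds
        refine Tendsto.congr' ?_ tφ
        filter_upwards [self_mem_nhdsWithin] with y hy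
        exact (ginner y hy).symm
      exact tendsto_nhds_unique t1 t2
    have hAj : A * r₀^j ≤ 1/r₀ := by
      rw [le_div_iff₀ hr₀0]
      have e : A*r₀^j*r₀ = A*r₀^(j+1) := by ring
      linarith [hA1, e.le, e.ge]
    rcases le_or_gt r r₀ with hler | hlt
    · -- inner bound
      have hgx : g r = A*((j:ℝ)+1)*r^j := by
        rcases lt_or_eq_of_le hler with hlt' | heq'
        · exact ginner r ⟨hrIoo.1, hlt'⟩
        · rw [heq']; exact hgr₀
      have hxj : r^j ≤ 1 := pow_le_one₀ hrIoo.1.le hrIoo.2.le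
      have hgnn' : 0 ≤ g r := by
        rw [hgx]
        exact mul_nonneg (mul_nonneg hA0 (by positivity)) (pow_nonneg hrIoo.1.le j)
      rw [abs_of_nonneg hgnn', hgx]
      have hle3 : A ≤ 1/r₀^(j+1) := by
        rw [le_div_iff₀ hr₀pow]; linarith [hA1]
      have hle2 : A*((j:ℝ)+1)*r^j ≤ ((j:ℝ)+1) * A := by
        have key := mul_nonneg (mul_nonneg (show (0:ℝ) ≤ (j:ℝ)+1 by positivity) hA0)
          (sub_nonneg.mpr hxj)
        nlinarith [key]
      have hle4 : ((j:ℝ)+1)*A ≤ ((j:ℝ)+1)/r₀^(j+1) := by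
        have := mul_le_mul_of_nonneg_left hle3 (by positivity : (0:ℝ) ≤ (j:ℝ)+1)
        calc ((j:ℝ)+1)*A ≤ ((j:ℝ)+1)*(1/r₀^(j+1)) := this
        _ = ((j:ℝ)+1)/r₀^(j+1) := by ring
      have hle5 : ((j:ℝ)+1)/r₀^(j+1) ≤ C := by
        rw [hCdef]
        exact div_le_div₀ (by linarith [hcR0, Nat.cast_nonneg (α:=ℝ) j]) (by linarith [hcR0]) hrpowN
          (pow_le_pow_of_le_one hr₀0.le (by linarith) (by omega))
      linarith
    · -- outer bound
      have ht0 : 0 < r - r₀ := by linarith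
      have ht1 : r - r₀ < 1 := by linarith [hrIoo.2]
      have hWat : ∀ x ∈ Ioo r₀ 1,
          HasDerivAt (fun y => cR/r₀^2 * (ε*(y-r₀) + (y-r₀)^3/3) - G y)
            (cR/r₀^2 * (ε + (x-r₀)^2) - cR * μ x * h x / x^2) x := by
        intro x hx
        have hxI : x ∈ Ioo (0:ℝ) 1 := ⟨lt_trans hr₀0 hx.1, hx.2⟩
        have d1 : HasDerivAt (fun y:ℝ => ε*(y-r₀) + (y-r₀)^3/3) (ε + (x-r₀)^2) x := by
          have e1 : HasDerivAt (fun y:ℝ => y - r₀) 1 x := (hasDerivAt_id x).sub_const r₀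
          have e2 := e1.pow 3
          have := (e1.const_mul ε).add (e2.div_const 3)
          refine this.congr_deriv ?_
          norm_num
        have dq : HasDerivAt (fun y:ℝ => cR/r₀^2 * (ε*(y-r₀) + (y-r₀)^3/3))
            (cR/r₀^2 * (ε + (x-r₀)^2)) x := d1.const_mul (cR/r₀^2)
        exact dq.sub (hGat x hxI)
      have hWmono : MonotoneOn (fun y => cR/r₀^2 * (ε*(y-r₀) + (y-r₀)^3/3) - G y)
          (Ico r₀ 1) := by
        apply monotoneOn_of_deriv_nonneg (convex_Ico r₀ 1)
        · apply ContinuousOn.sub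
          · exact (continuous_const.mul ((continuous_const.mul (continuous_id.sub
              continuous_const)).add (((continuous_id.sub continuous_const).pow 3).div_const 3))).continuousOn
          · exact hGcont.mono (fun y hy => ⟨lt_of_lt_of_le hr₀0 hy.1, hy.2⟩)
        · rw [interior_Ico]
          exact fun x hx => (hWat x hx).differentiableAt.differentiableWithinAt
        · intro x hx
          rw [interior_Ico] at hx
          rw [(hWat x hx).deriv]
          have hxI : x ∈ Ioo (0:ℝ) 1 := ⟨lt_trans hr₀0 hx.1, hx.2⟩
          have hμx : μ x = x^m * (ε + (x-r₀)^2) := by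
            simp only [hμdef]
            rw [max_eq_left (by linarith [hx.1] : (0:ℝ) ≤ x - r₀)]
          have hxm1 : x^m ≤ 1 := pow_le_one₀ hxI.1.le hxI.2.le
          have hh0 : 0 ≤ h x := hge0 x (Ioo_subset_Icc_self hxI)
          have hh1 : h x ≤ 1 := hle1 x (Ioo_subset_Icc_self hxI)
          have hr₀x : r₀^2 ≤ x^2 := by nlinarith [hx.1, hr₀0]
          have hnum : cR * μ x * h x ≤ cR * (ε + (x-r₀)^2) := by
            rw [hμx]
            have t1 : (0:ℝ) ≤ ε + (x-r₀)^2 := by positivity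
            have hposx : (0:ℝ) ≤ x ^ m := (pow_pos hxI.1 m).le
            calc cR * (x^m*(ε+(x-r₀)^2)) * h x ≤ cR * (x^m*(ε+(x-r₀)^2)) * 1 := by
                  apply mul_le_mul_of_nonneg_left hh1
                    (mul_nonneg hcR0 (mul_nonneg hposx t1))
            _ = cR * (ε+(x-r₀)^2) * x^m := by ring
            _ ≤ cR * (ε+(x-r₀)^2) * 1 :=
                  mul_le_mul_of_nonneg_left hxm1 (mul_nonneg hcR0 t1)
            _ = cR * (ε + (x-r₀)^2) := by ring
          have hdiv : cR * μ x * h x / x^2 ≤ cR * (ε + (x-r₀)^2) / r₀^2 :=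
            div_le_div₀ (by positivity) hnum (by positivity) hr₀x
          have heq' : cR/r₀^2 * (ε + (x-r₀)^2) = cR * (ε + (x-r₀)^2)/r₀^2 := by ring
          linarith
      have hWval := hWmono (left_mem_Ico.mpr hr₀1) ⟨hlt.le, hrIoo.2⟩ hlt.le
      simp only at hWval
      rw [show ε*(r₀-r₀)+(r₀-r₀)^3/3 = (0:ℝ) from by ring, mul_zero] at hWval
      have hGr : G r ≤ G r₀ + cR/r₀^2*(ε*(r-r₀) + (r-r₀)^3/3) := by linarith
      have hGr₀val : G r₀ = r₀^m * ε * (A*((j:ℝ)+1)*r₀^j) := by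
        simp only [hGdef, hμdef]
        rw [hgr₀]
        simp [sub_self]
      have hr₀m1 : r₀^m ≤ 1 := pow_le_one₀ hr₀0.le hr₀1.le
      have hGr₀bd : G r₀ ≤ ε * ((j:ℝ)+1) / r₀ := by
        rw [hGr₀val]
        have s3 : 0 ≤ A*r₀^j := mul_nonneg hA0 (pow_nonneg hr₀0.le j)
        calc r₀^m * ε * (A*((j:ℝ)+1)*r₀^j) = ε*((j:ℝ)+1)*(A*r₀^j)*r₀^m := by ring
        _ ≤ ε*((j:ℝ)+1)*(1/r₀)*1 := by
            apply mul_le_mul (mul_le_mul_of_nonneg_left hAj (by positivity)) hr₀m1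
              (pow_nonneg hr₀0.le m) (by positivity)
        _ = ε*((j:ℝ)+1)/r₀ := by ring
      set D : ℝ := ((j:ℝ)+1)/r₀^(m+1) + 2*cR/r₀^(m+2) with hDdef
      clear_value D
      have hDr₀ : D * r₀^m = ((j:ℝ)+1)/r₀ + 2*cR/r₀^2 := by
        rw [hDdef]
        field_simp
        ring
      have hμr_lb : r₀^m * (ε + (r-r₀)^2) ≤ μ r := by
        simp only [hμdef]
        rw [max_eq_left (by linarith : (0:ℝ) ≤ r - r₀)]
        have hpw : r₀^m ≤ r^m := pow_le_pow_left₀ hr₀0.le hlt.le m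
        have : (0:ℝ) ≤ ε + (r-r₀)^2 := by positivity
        nlinarith
      have hkey : ε*((j:ℝ)+1)/r₀ + cR/r₀^2*(ε*(r-r₀) + (r-r₀)^3/3)
          ≤ D * (r₀^m * (ε + (r-r₀)^2)) := by
        have expand : D * (r₀^m * (ε + (r-r₀)^2))
            = (((j:ℝ)+1)/r₀ + 2*cR/r₀^2) * (ε + (r-r₀)^2) := by
          rw [← mul_assoc, hDr₀]
        rw [expand]
        have f1 : cR*(ε*(r-r₀)) ≤ cR*ε := by
          nlinarith [mul_nonneg hcRpos.le (mul_nonneg hε.le (sub_nonneg.mpr ht1.le))]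
        have f2 : cR*((r-r₀)^3/3) ≤ cR*(r-r₀)^2 := by
          nlinarith [mul_nonneg (mul_nonneg hcRpos.le (sq_nonneg (r-r₀)))
            (by linarith : (0:ℝ) ≤ 1-(r-r₀)/3)]
        have base : ε*((j:ℝ)+1)*r₀ + cR*(ε*(r-r₀) + (r-r₀)^3/3)
            ≤ (((j:ℝ)+1)*r₀ + 2*cR)*(ε+(r-r₀)^2) := by
          have f3 : 0 ≤ ((j:ℝ)+1)*r₀*(r-r₀)^2 := by positivity
          nlinarith [f1, f2, f3, mul_pos hcRpos hε]
        calc ε*((j:ℝ)+1)/r₀ + cR/r₀^2*(ε*(r-r₀) + (r-r₀)^3/3)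
            = (ε*((j:ℝ)+1)*r₀ + cR*(ε*(r-r₀) + (r-r₀)^3/3))/r₀^2 := by
              field_simp
        _ ≤ ((((j:ℝ)+1)*r₀ + 2*cR)*(ε+(r-r₀)^2))/r₀^2 :=
              (div_le_div_iff_of_pos_right (by positivity)).mpr base
        _ = (((j:ℝ)+1)/r₀ + 2*cR/r₀^2) * (ε + (r-r₀)^2) := by
              field_simp
      have hDpos : 0 ≤ D := by
        rw [hDdef]
        have := pow_pos hr₀0 (m+1)
        have := pow_pos hr₀0 (m+2)
        have := Nat.cast_nonneg (α:=ℝ) j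
        positivity
      have hμG : μ r * g r ≤ μ r * D := by
        have e1 : μ r * g r = G r := by simp only [hGdef]
        have hmul : D * (r₀^m*(ε+(r-r₀)^2)) ≤ D * μ r := mul_le_mul_of_nonneg_left hμr_lb hDpos
        have hcomm : D * μ r = μ r * D := mul_comm _ _
        linarith [hGr, hGr₀bd, hkey, hmul, e1, hcomm]
      have hgD : g r ≤ D := le_of_mul_le_mul_left hμG (hμpos r hrIoo.1)
      have hDC : D ≤ C := by
        rw [hDdef, hCdef]
        have p1 : r₀^N ≤ r₀^(m+1) := pow_le_pow_of_le_one hr₀0.le (by linarith) (by omega)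
        have p2 : r₀^N ≤ r₀^(m+2) := pow_le_pow_of_le_one hr₀0.le (by linarith) (by omega)
        have q1 : ((j:ℝ)+1)/r₀^(m+1) ≤ ((j:ℝ)+1)/r₀^N :=
          div_le_div₀ (by linarith [Nat.cast_nonneg (α:=ℝ) j]) le_rfl hrpowN p1
        have q2 : 2*cR/r₀^(m+2) ≤ 2*cR/r₀^N :=
          div_le_div₀ (by linarith [hcR0]) le_rfl hrpowN p2
        have q3 : ((j:ℝ)+1)/r₀^N + 2*cR/r₀^N = (((j:ℝ)+1) + 2*cR)/r₀^N := by
          rw [← add_div]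
        have q4 : (((j:ℝ)+1) + 2*cR)/r₀^N ≤ ((j:ℝ)+1+2*cR+2)/r₀^N :=
          (div_le_div_iff_of_pos_right hrpowN).mpr (by linarith)
        linarith
      rw [abs_of_nonneg (hgnn r hrIoo)]
      linarith
end

section
/- Let n ≥ 2, k ≥ 1, ε ∈ (0,1), r₀ ∈ (0,1/2), and b(r) = (n−2)/r + 2(r−r₀)₊/(ε + (r−r₀)₊²). Let h be a positive C¹ function on [r₀/2, 1] satisfying r^k ≤ h(r) ≤ 1. Then there exists C > 0 depending only on n, k, and r₀ such that for all t, r ∈ [r₀/2, 1]: exp(∫_{r₀/2}^{t} (2h'(s)/h(s) + b(s)) ds) ≤ C (ε + (t−r₀)₊²)/ε, and exp(−∫_{r₀/2}^{r} (2h'(s)/h(s) + b(s)) ds) ≤ C ε/(ε + (r−r₀)₊²). -/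
open Set


open Filter in
lemma maxsq_deriv (c x : ℝ) :
    HasDerivAt (fun s : ℝ => max (s - c) 0 ^ 2) (2 * max (x - c) 0) x := by
  rcases lt_trichotomy x c with hxc | rfl | hxc
  · have hev : (fun _ : ℝ => (0:ℝ)) =ᶠ[nhds x] (fun s : ℝ => max (s - c) 0 ^ 2) := by
      filter_upwards [eventually_lt_nhds hxc] with y hy
      simp [max_eq_right (by linarith : y - c ≤ 0)]
    have h0 : (2:ℝ) * max (x - c) 0 = 0 := by
      simp [max_eq_right (by linarith : x - c ≤ 0)]
    rw [h0]
    exact (hasDerivAt_const x (0:ℝ)).congr_of_eventuallyEq hev.symm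
  · have h0 : (2:ℝ) * max (x - x) 0 = 0 := by simp
    rw [h0, hasDerivAt_iff_tendsto_slope]
    apply squeeze_zero_norm' (a := fun y => |y - x|)
    · filter_upwards [self_mem_nhdsWithin] with y (hy : y ≠ x)
      have hy' : y - x ≠ 0 := sub_ne_zero.mpr hy
      have h1 : max (y - x) 0 ^ 2 ≤ (y - x) ^ 2 := by
        rcases le_total (y - x) 0 with h | h
        · simpa [max_eq_right h] using sq_nonneg (y - x)
        · simp [max_eq_left h]
      rw [slope_def_field]
      simp only [sub_self, max_self, ne_eq, OfNat.ofNat_ne_zero, not_false_eq_true,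
        zero_pow, sub_zero]
      rw [Real.norm_eq_abs, abs_div, div_le_iff₀ (abs_pos.mpr hy')]
      calc |max (y - x) 0 ^ 2| = max (y - x) 0 ^ 2 := abs_of_nonneg (by positivity)
        _ ≤ (y - x) ^ 2 := h1
        _ = |y - x| * |y - x| := by rw [← sq_abs]; ring
    · have hc : Continuous (fun y : ℝ => |y - x|) :=
        (continuous_id.sub continuous_const).abs
      have h2 := hc.tendsto x
      simp only [sub_self, abs_zero] at h2
      exact h2.mono_left nhdsWithin_le_nhds
  · have hev : (fun s : ℝ => (s - c) ^ 2) =ᶠ[nhds x] (fun s : ℝ => max (s - c) 0 ^ 2) := by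
      filter_upwards [eventually_gt_nhds hxc] with y hy
      simp [max_eq_left (by linarith : (0:ℝ) ≤ y - c)]
    have hd : HasDerivAt (fun s : ℝ => (s - c) ^ 2) (2 * (x - c)) x := by
      simpa using ((hasDerivAt_id x).sub_const c).fun_pow 2
    have h0 : (2:ℝ) * max (x - c) 0 = 2 * (x - c) := by
      rw [max_eq_left (by linarith : (0:ℝ) ≤ x - c)]
    rw [h0]
    exact hd.congr_of_eventuallyEq hev.symm

set_option maxHeartbeats 1000000 in
/-- For `n ≥ 2`, `k ≥ 1`, `ε ∈ (0,1)`, `r₀ ∈ (0,1/2)`,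
`b(r) = (n−2)/r + 2(r−r₀)₊/(ε + (r−r₀)₊²)`, and `h` a positive `C¹` function on
`[r₀/2, 1]` with `r^k ≤ h(r) ≤ 1`, there is `C > 0` depending only on `n`, `k`, `r₀`
such that for all `t, r ∈ [r₀/2, 1]`:
`exp(∫_{r₀/2}^{t} (2h'/h + b)) ≤ C (ε + (t−r₀)₊²)/ε` and
`exp(−∫_{r₀/2}^{r} (2h'/h + b)) ≤ C ε/(ε + (r−r₀)₊²)`. -/
theorem stmt13 (n k : ℕ) (hn : 2 ≤ n) (hk : 1 ≤ k) (r₀ : ℝ)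
    (hr₀ : r₀ ∈ Ioo (0:ℝ) (1/2)) :
    ∃ C : ℝ, 0 < C ∧
      ∀ ε : ℝ, ε ∈ Ioo (0:ℝ) 1 →
        ∀ h h' : ℝ → ℝ,
          (∀ s ∈ Icc (r₀/2) 1, HasDerivWithinAt h (h' s) (Icc (r₀/2) 1) s) →
          ContinuousOn h' (Icc (r₀/2) 1) →
          (∀ s ∈ Icc (r₀/2) 1, 0 < h s) →
          (∀ s ∈ Icc (r₀/2) 1, s ^ k ≤ h s ∧ h s ≤ 1) →
          ∀ t ∈ Icc (r₀/2) 1, ∀ r ∈ Icc (r₀/2) 1,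
            Real.exp (∫ s in (r₀/2)..t,
                (2 * h' s / h s +
                  (((n : ℝ) - 2)/s + 2 * max (s - r₀) 0 / (ε + max (s - r₀) 0 ^ 2)))) ≤
              C * (ε + max (t - r₀) 0 ^ 2) / ε ∧
            Real.exp (-∫ s in (r₀/2)..r,
                (2 * h' s / h s +
                  (((n : ℝ) - 2)/s + 2 * max (s - r₀) 0 / (ε + max (s - r₀) 0 ^ 2)))) ≤
              C * ε / (ε + max (r - r₀) 0 ^ 2) := by
  obtain ⟨hr₀0, hr₀half⟩ := hr₀
  set a : ℝ := r₀ / 2 with ha_def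
  have ha0 : 0 < a := by positivity
  have har : a < r₀ := by simp only [ha_def]; linarith
  have ha1 : a ≤ 1 := by simp only [ha_def]; linarith
  set D : ℝ := (a ^ k) ^ 2 * a ^ (n - 2) with hD_def
  have hD0 : 0 < D := by positivity
  refine ⟨D⁻¹, by positivity, ?_⟩
  intro ε hε h h' hd hc' hpos hbound t ht r hr
  obtain ⟨hε0, hε1⟩ := hε
  have hden : ∀ s : ℝ, 0 < ε + max (s - r₀) 0 ^ 2 := fun s => by positivity
  have hcontH : ContinuousOn h (Icc a 1) := fun s hs => (hd s hs).continuousWithinAt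
  have cmax : Continuous fun s : ℝ => max (s - r₀) 0 :=
    (continuous_id.sub continuous_const).max continuous_const
  -- the integrand
  set g : ℝ → ℝ := fun s =>
    2 * h' s / h s + (((n : ℝ) - 2)/s + 2 * max (s - r₀) 0 / (ε + max (s - r₀) 0 ^ 2))
    with hg_def
  -- the "potential"
  set P : ℝ → ℝ := fun x => h x ^ 2 * x ^ (n - 2) * (ε + max (x - r₀) 0 ^ 2) with hP_def
  have hPpos : ∀ x ∈ Icc a 1, 0 < P x := by
    intro x hx
    have hx0 : 0 < x := lt_of_lt_of_le ha0 hx.1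
    have := hpos x hx
    have := hden x
    positivity
  -- the antiderivative
  set F : ℝ → ℝ := fun s =>
    2 * Real.log (h s) + (((n : ℝ) - 2) * Real.log s + Real.log (ε + max (s - r₀) 0 ^ 2))
    with hF_def
  have hcast : ((n - 2 : ℕ) : ℝ) = (n : ℝ) - 2 := by
    push_cast [Nat.cast_sub hn]; ring
  have logP : ∀ y ∈ Icc a 1, F y = Real.log (P y) := by
    intro y hy
    have hy0 : 0 < y := lt_of_lt_of_le ha0 hy.1
    have hhy : 0 < h y := hpos y hy
    rw [hP_def]
    rw [Real.log_mul (by positivity) (hden y).ne',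
        Real.log_mul (by positivity) (by positivity),
        Real.log_pow, Real.log_pow, hcast]
    push_cast
    ring
  have contg : ContinuousOn g (Icc a 1) := by
    apply ContinuousOn.add
    · exact (continuousOn_const.mul hc').div hcontH fun s hs => (hpos s hs).ne'
    · apply ContinuousOn.add
      · exact continuousOn_const.div continuousOn_id
          fun s hs => (lt_of_lt_of_le ha0 hs.1).ne'
      · exact (Continuous.div (continuous_const.mul cmax)
          (continuous_const.add (cmax.pow 2)) fun s => (hden s).ne').continuousOn
  have key : ∀ x ∈ Icc a 1, ∫ s in a..x, g s = Real.log (P x) - Real.log (P a) := by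
    intro x hx
    have hax : a ≤ x := hx.1
    have contF : ContinuousOn F (Icc a x) := by
      apply ContinuousOn.mono _ (Icc_subset_Icc le_rfl hx.2)
      apply ContinuousOn.add
      · exact continuousOn_const.mul (hcontH.log fun s hs => (hpos s hs).ne')
      · apply ContinuousOn.add
        · exact continuousOn_const.mul (continuousOn_id.log
            fun s hs => (lt_of_lt_of_le ha0 hs.1).ne')
        · exact ((continuous_const.add (cmax.pow 2)).continuousOn).log
            fun s _ => (hden s).ne'
    have hderiv : ∀ y ∈ Ioo a x, HasDerivWithinAt F (g y) (Ioi y) y := by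
      intro y hy
      have hy1 : y ∈ Icc a 1 := ⟨hy.1.le, (hy.2.trans_le hx.2).le⟩
      have hy0 : 0 < y := lt_of_lt_of_le ha0 hy1.1
      have hmem : Icc a 1 ∈ nhds y := Icc_mem_nhds hy.1 (hy.2.trans_le hx.2)
      have hhy : HasDerivAt h (h' y) y := (hd y hy1).hasDerivAt hmem
      have d1 : HasDerivAt (fun s => Real.log (h s)) (h' y / h y) y :=
        hhy.log (hpos y hy1).ne'
      have d2 : HasDerivAt Real.log y⁻¹ y := Real.hasDerivAt_log hy0.ne'
      have d3 : HasDerivAt (fun s => Real.log (ε + max (s - r₀) 0 ^ 2))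
          ((0 + 2 * max (y - r₀) 0) / (ε + max (y - r₀) 0 ^ 2)) y :=
        (((hasDerivAt_const y ε).add (maxsq_deriv r₀ y)).log (hden y).ne')
      have dF : HasDerivAt F
          (2 * (h' y / h y) + (((n : ℝ) - 2) * y⁻¹ +
            (0 + 2 * max (y - r₀) 0) / (ε + max (y - r₀) 0 ^ 2))) y :=
        (d1.const_mul 2).add ((d2.const_mul ((n : ℝ) - 2)).add d3)
      have : g y = 2 * (h' y / h y) + (((n : ℝ) - 2) * y⁻¹ +
          (0 + 2 * max (y - r₀) 0) / (ε + max (y - r₀) 0 ^ 2)) := by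
        rw [hg_def]
        field_simp
        ring
      rw [this]
      exact dF.hasDerivWithinAt
    have hint : IntervalIntegrable g MeasureTheory.volume a x := by
      apply ContinuousOn.intervalIntegrable
      apply contg.mono
      rw [uIcc_of_le hax]
      exact Icc_subset_Icc le_rfl hx.2
    have := intervalIntegral.integral_eq_sub_of_hasDeriv_right_of_le hax contF hderiv hint
    rw [this, logP x hx, logP a ⟨le_rfl, ha1⟩]
  -- values at a
  have hmaxa : max (a - r₀) 0 = 0 := max_eq_right (by linarith)
  have hPa : P a = h a ^ 2 * a ^ (n - 2) * ε := by rw [hP_def]; simp [hmaxa]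
  have haIcc : a ∈ Icc a (1:ℝ) := ⟨le_rfl, ha1⟩
  have hba := hbound a haIcc
  have hpa := hpos a haIcc
  -- bounds at a
  have hPa_lb : D * ε ≤ P a := by
    rw [hPa, hD_def]
    have h1 : (a ^ k) ^ 2 ≤ h a ^ 2 := pow_le_pow_left₀ (by positivity) hba.1 2
    gcongr
  have hPa_ub : P a ≤ ε := by
    rw [hPa]
    have h1 : h a ^ 2 ≤ 1 := by
      have := hba.2; nlinarith [hpa]
    have h2 : a ^ (n - 2) ≤ 1 := pow_le_one₀ ha0.le ha1
    have h3 : h a ^ 2 * a ^ (n - 2) ≤ 1 := by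
      calc h a ^ 2 * a ^ (n - 2) ≤ 1 * 1 := by
            apply mul_le_mul h1 h2 (by positivity) (by norm_num)
        _ = 1 := by norm_num
    nlinarith [mul_le_mul_of_nonneg_right h3 hε0.le]
  constructor
  · -- first bound, at t
    rw [key t ht, ← Real.log_div (hPpos t ht).ne' (hPpos a haIcc).ne',
      Real.exp_log (div_pos (hPpos t ht) (hPpos a haIcc))]
    have hPt_ub : P t ≤ ε + max (t - r₀) 0 ^ 2 := by
      show h t ^ 2 * t ^ (n - 2) * (ε + max (t - r₀) 0 ^ 2) ≤ ε + max (t - r₀) 0 ^ 2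
      have hbt := hbound t ht
      have hpt := hpos t ht
      have ht0 : 0 < t := lt_of_lt_of_le ha0 ht.1
      have h1 : h t ^ 2 ≤ 1 := by nlinarith [hbt.2, hpt]
      have h2 : t ^ (n - 2) ≤ 1 := pow_le_one₀ ht0.le ht.2
      have h3 : h t ^ 2 * t ^ (n - 2) ≤ 1 := by
        calc h t ^ 2 * t ^ (n - 2) ≤ 1 * 1 := by
              apply mul_le_mul h1 h2 (by positivity) (by norm_num)
          _ = 1 := by norm_num
      nlinarith [mul_le_mul_of_nonneg_right h3 (hden t).le]
    calc P t / P a ≤ (ε + max (t - r₀) 0 ^ 2) / (D * ε) := by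
          apply div_le_div₀ (hden t).le hPt_ub (by positivity) hPa_lb
      _ = D⁻¹ * (ε + max (t - r₀) 0 ^ 2) / ε := by
          field_simp
  · -- second bound, at r
    rw [key r hr, neg_sub, ← Real.log_div (hPpos a haIcc).ne' (hPpos r hr).ne',
      Real.exp_log (div_pos (hPpos a haIcc) (hPpos r hr))]
    have hPr_lb : D * (ε + max (r - r₀) 0 ^ 2) ≤ P r := by
      show (a ^ k) ^ 2 * a ^ (n - 2) * (ε + max (r - r₀) 0 ^ 2) ≤
        h r ^ 2 * r ^ (n - 2) * (ε + max (r - r₀) 0 ^ 2)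
      have hbr := hbound r hr
      have har' : a ≤ r := hr.1
      have h1 : (a ^ k) ^ 2 ≤ h r ^ 2 := by
        apply pow_le_pow_left₀ (by positivity)
        calc a ^ k ≤ r ^ k := pow_le_pow_left₀ ha0.le har' k
          _ ≤ h r := hbr.1
      have h2 : a ^ (n - 2) ≤ r ^ (n - 2) := pow_le_pow_left₀ ha0.le har' (n - 2)
      gcongr
    calc P a / P r ≤ ε / (D * (ε + max (r - r₀) 0 ^ 2)) := by
          apply div_le_div₀ hε0.le hPa_ub (by positivity) hPr_lb
      _ = D⁻¹ * ε / (ε + max (r - r₀) 0 ^ 2) := by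
          field_simp
end

section
/- Let n ≥ 2, k ≥ 1, γ ∈ (0,1), ε ∈ (0,1/4), r₀ ∈ (0,1/2), C₀ > 0, and b(r) = (n−2)/r + 2(r−r₀)₊/(ε + (r−r₀)₊²). Let V ∈ C²((0,1)) ∩ C([0,1)) satisfy V(0) = 0, |V(r)| ≤ C₀ on (0,1), |V'(r₀/2)| ≤ C₀, and V''(r) + b(r) V'(r) − (k(k+n−3)/r²) V(r) = A'(r) + B(r) on (0,1), where A ∈ C¹((0,1)) and B ∈ C((0,1)) satisfy |A(r)| ≤ C₀ (r−r₀)₊^{γ}/(ε + (r−r₀)₊²)^{1/2} and |B(r)| ≤ C₀ (r−r₀)₊^{γ}/(ε + (r−r₀)₊²) for 0 < r < 1. Then |V'(r)| ≤ C (ε + (r−r₀)₊²)^{(γ−1)/2} for all r ∈ [r₀/2, 1), where C > 0 depends only on n, k, r₀, γ, and C₀ (in particular C is independent of ε). -/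
open Set

open MeasureTheory intervalIntegral

set_option maxHeartbeats 1000000

lemma maxsq_hasDerivAt (r₀ x : ℝ) :
    HasDerivAt (fun y : ℝ => max (y - r₀) 0 ^ 2) (2 * max (x - r₀) 0) x := by
  rcases lt_trichotomy x r₀ with hx | hx | hx
  · have hev : (fun y : ℝ => max (y - r₀) 0 ^ 2) =ᶠ[nhds x] fun _ => (0:ℝ) := by
      filter_upwards [Iio_mem_nhds hx] with y hy
      rw [max_eq_right (by simp only [mem_Iio] at hy; linarith : y - r₀ ≤ 0)]
      ring
    have h0 : (2 : ℝ) * max (x - r₀) 0 = 0 := by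
      rw [max_eq_right (by linarith)]; ring
    rw [h0]
    exact (hasDerivAt_const x (0:ℝ)).congr_of_eventuallyEq hev
  · subst hx
    rw [hasDerivAt_iff_isLittleO]
    rw [Asymptotics.isLittleO_iff]
    intro c hc
    filter_upwards [Metric.ball_mem_nhds x hc] with y hy
    rw [Metric.mem_ball, Real.dist_eq] at hy
    have h1 : max (y - x) 0 ≤ |y - x| := max_le (le_abs_self _) (abs_nonneg _)
    have h2 : (0:ℝ) ≤ max (y - x) 0 := le_max_right _ _
    have h3 : max (y - x) 0 ^ 2 ≤ c * |y - x| := by nlinarith [abs_nonneg (y - x)]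
    have h4 : max (x - x) 0 = 0 := by simp
    calc ‖max (y - x) 0 ^ 2 - max (x - x) 0 ^ 2 - (y - x) • (2 * max (x - x) 0)‖
        = max (y - x) 0 ^ 2 := by
          rw [h4]
          simp [abs_of_nonneg (by positivity : (0:ℝ) ≤ max (y - x) 0 ^ 2)]
      _ ≤ c * ‖y - x‖ := by rw [Real.norm_eq_abs]; exact h3
  · have hev : (fun y : ℝ => max (y - r₀) 0 ^ 2) =ᶠ[nhds x] fun y => (y - r₀) ^ 2 := by
      filter_upwards [Ioi_mem_nhds hx] with y hy
      rw [max_eq_left (by simp only [mem_Ioi] at hy; linarith : (0:ℝ) ≤ y - r₀)]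
    have hd : HasDerivAt (fun y : ℝ => (y - r₀) ^ 2) (2 * (x - r₀)) x := by
      have := ((hasDerivAt_id x).sub_const r₀).fun_pow 2
      simpa using this
    rw [max_eq_left (by linarith : (0:ℝ) ≤ x - r₀)]
    exact hd.congr_of_eventuallyEq hev

noncomputable def muF (n : ℕ) (r₀ ε t : ℝ) : ℝ :=
  t ^ ((n:ℝ) - 2) * (ε + max (t - r₀) 0 ^ 2)

noncomputable def muF' (n : ℕ) (r₀ ε t : ℝ) : ℝ :=
  ((n:ℝ) - 2) * t ^ ((n:ℝ) - 3) * (ε + max (t - r₀) 0 ^ 2)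
    + t ^ ((n:ℝ) - 2) * (2 * max (t - r₀) 0)

lemma muF_hasDerivAt (n : ℕ) (r₀ ε : ℝ) {t : ℝ} (ht : 0 < t) :
    HasDerivAt (muF n r₀ ε) (muF' n r₀ ε t) t := by
  have h1 : HasDerivAt (fun y : ℝ => y ^ ((n:ℝ)-2)) (((n:ℝ)-2) * t ^ ((n:ℝ)-2-1)) t :=
    Real.hasDerivAt_rpow_const (Or.inl ht.ne')
  have h2 : HasDerivAt (fun y : ℝ => ε + max (y - r₀) 0 ^ 2) (0 + 2 * max (t - r₀) 0) t :=
    (hasDerivAt_const t ε).add (maxsq_hasDerivAt r₀ t)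
  have h3 := h1.mul h2
  have h4 : muF' n r₀ ε t = ((n:ℝ)-2) * t ^ ((n:ℝ)-2-1) * (ε + max (t - r₀) 0 ^ 2)
      + t ^ ((n:ℝ)-2) * (0 + 2 * max (t - r₀) 0) := by
    unfold muF'
    rw [show (n:ℝ)-3 = (n:ℝ)-2-1 by ring]
    ring
  rw [show muF n r₀ ε = fun t : ℝ => t ^ ((n:ℝ) - 2) * (ε + max (t - r₀) 0 ^ 2) from rfl, h4]
  exact h3

lemma muF'_eq (n : ℕ) {r₀ ε t : ℝ} (ht : 0 < t) (hX : 0 < ε + max (t - r₀) 0 ^ 2) :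
    muF' n r₀ ε t = muF n r₀ ε t * bCoeff n r₀ ε t := by
  unfold muF' muF bCoeff
  rw [show (n:ℝ)-3 = ((n:ℝ)-2) - 1 by ring, Real.rpow_sub_one ht.ne']
  field_simp

noncomputable def KC (n k : ℕ) (r₀ C₀ : ℝ) : ℝ := (k:ℝ)*((k:ℝ)+(n:ℝ)-3)*(2/r₀)^2*C₀
noncomputable def KH (n k : ℕ) (r₀ C₀ : ℝ) : ℝ :=
  KC n k r₀ C₀ + C₀ + ((n:ℝ)-2)*(2/r₀)*2*C₀ + 2*C₀

lemma KC_nonneg (n k : ℕ) (hn : 2 ≤ n) (hk : 1 ≤ k) {r₀ C₀ : ℝ} (hr0 : 0 < r₀)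
    (hC₀ : 0 < C₀) : 0 ≤ KC n k r₀ C₀ := by
  have hn2 : (2:ℝ) ≤ (n:ℝ) := by exact_mod_cast hn
  have hk1 : (1:ℝ) ≤ (k:ℝ) := by exact_mod_cast hk
  have hκ : 0 ≤ (k:ℝ)*((k:ℝ)+(n:ℝ)-3) := by nlinarith
  unfold KC
  have : (0:ℝ) ≤ (2/r₀)^2*C₀ := by positivity
  nlinarith

lemma KH_pos (n k : ℕ) (hn : 2 ≤ n) (hk : 1 ≤ k) {r₀ C₀ : ℝ} (hr0 : 0 < r₀)
    (hC₀ : 0 < C₀) : 0 < KH n k r₀ C₀ := by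
  have hn2 : (2:ℝ) ≤ (n:ℝ) := by exact_mod_cast hn
  have h1 := KC_nonneg n k hn hk hr0 hC₀
  have h2 : (0:ℝ) ≤ ((n:ℝ)-2)*(2/r₀)*2*C₀ := by
    apply mul_nonneg (mul_nonneg (mul_nonneg (by linarith) (by positivity)) (by norm_num)) hC₀.le
  unfold KH
  nlinarith

lemma est_h (n k : ℕ) (hn : 2 ≤ n) (hk : 1 ≤ k) {r₀ C₀ γ ε t : ℝ}
    (hr0 : 0 < r₀) (hr1 : r₀ < 1/2) (hC₀ : 0 < C₀) (hg0 : 0 < γ) (hg1 : γ < 1)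
    (hε0 : 0 < ε) (hε4 : ε < 1/4) (hts : r₀/2 ≤ t) (ht1 : t < 1)
    (a b v : ℝ) (hA : |a| ≤ C₀ * max (t - r₀) 0 ^ γ / (ε + max (t - r₀) 0 ^ 2) ^ ((1:ℝ)/2))
    (hB : |b| ≤ C₀ * max (t - r₀) 0 ^ γ / (ε + max (t - r₀) 0 ^ 2))
    (hV : |v| ≤ C₀) :
    |muF n r₀ ε t * (b + ((k:ℝ)*((k:ℝ)+(n:ℝ)-3)/t^2) * v) - muF' n r₀ ε t * a| ≤
      KC n k r₀ C₀ * ε + KH n k r₀ C₀ * max (t - r₀) 0 ^ γ := by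
  have hn2 : (2:ℝ) ≤ (n:ℝ) := by exact_mod_cast hn
  have hk1 : (1:ℝ) ≤ (k:ℝ) := by exact_mod_cast hk
  have ht0 : 0 < t := lt_of_lt_of_le (by positivity) hts
  set w : ℝ := max (t - r₀) 0 with hwdef
  have hw0 : 0 ≤ w := le_max_right _ _
  have hw1 : w ≤ 1 := max_le (by linarith) (by norm_num)
  set X : ℝ := ε + w ^ 2 with hXdef
  have hX0 : 0 < X := by positivity
  have hX2 : X ≤ 2 := by rw [hXdef]; nlinarith
  have hw2X : w ^ 2 ≤ X := by rw [hXdef]; nlinarith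
  have hwγ0 : 0 ≤ w ^ γ := Real.rpow_nonneg hw0 γ
  have ht2 : t ^ ((n:ℝ)-2) ≤ 1 := Real.rpow_le_one ht0.le ht1.le (by linarith)
  have ht2' : 0 < t ^ ((n:ℝ)-2) := Real.rpow_pos_of_pos ht0 _
  -- X^(1/2) facts
  have hXh0 : 0 < X ^ ((1:ℝ)/2) := Real.rpow_pos_of_pos hX0 _
  have hXh : X ^ ((1:ℝ)/2) * X ^ ((1:ℝ)/2) = X := by
    rw [← Real.rpow_add hX0]; norm_num
  have hXh2 : X ^ ((1:ℝ)/2) ≤ 2 := by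
    calc X ^ ((1:ℝ)/2) ≤ (2:ℝ) ^ ((1:ℝ)/2) :=
          Real.rpow_le_rpow hX0.le hX2 (by norm_num)
      _ ≤ (2:ℝ) ^ (1:ℝ) :=
          Real.rpow_le_rpow_of_exponent_le (by norm_num) (by norm_num)
      _ = 2 := Real.rpow_one 2
  have hwXh : w ≤ X ^ ((1:ℝ)/2) := by
    have h1 : (w ^ 2) ^ ((1:ℝ)/2) = w := by
      rw [← Real.rpow_natCast w 2, ← Real.rpow_mul hw0]
      norm_num
    calc w = (w ^ 2) ^ ((1:ℝ)/2) := h1.symm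
      _ ≤ X ^ ((1:ℝ)/2) := Real.rpow_le_rpow (by positivity) hw2X (by norm_num)
  have hw2γ : w ^ 2 ≤ w ^ γ := by
    rcases eq_or_lt_of_le hw0 with h | h
    · rw [← h, Real.zero_rpow hg0.ne']
      norm_num
    · rw [← Real.rpow_natCast w 2]
      exact Real.rpow_le_rpow_of_exponent_ge h hw1 (by push_cast; linarith)
  -- t^(n-3) bound
  have ht3 : t ^ ((n:ℝ)-3) ≤ 2/r₀ := by
    rw [show (n:ℝ)-3 = ((n:ℝ)-2) + (-1) by ring, Real.rpow_add ht0, Real.rpow_neg_one]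
    have h1 : t⁻¹ ≤ 2/r₀ := by
      have h2 := inv_anti₀ (show (0:ℝ) < r₀/2 by positivity) hts
      rwa [inv_div] at h2
    calc t ^ ((n:ℝ)-2) * t⁻¹ ≤ 1 * t⁻¹ :=
          mul_le_mul_of_nonneg_right ht2 (by positivity)
      _ = t⁻¹ := one_mul _
      _ ≤ 2/r₀ := h1
  -- bound on μ |B|
  have hμB : muF n r₀ ε t * |b| ≤ C₀ * w ^ γ := by
    unfold muF
    rw [← hwdef, ← hXdef]
    calc t ^ ((n:ℝ)-2) * X * |b| ≤ t ^ ((n:ℝ)-2) * X * (C₀ * w ^ γ / X) := by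
          apply mul_le_mul_of_nonneg_left hB (by positivity)
      _ = t ^ ((n:ℝ)-2) * (C₀ * w ^ γ) := by field_simp
      _ ≤ 1 * (C₀ * w ^ γ) := mul_le_mul_of_nonneg_right ht2 (by positivity)
      _ = C₀ * w ^ γ := one_mul _
  -- bound on μ |c v|
  have hκ : 0 ≤ (k:ℝ)*((k:ℝ)+(n:ℝ)-3) := by nlinarith
  have hcv : |((k:ℝ)*((k:ℝ)+(n:ℝ)-3)/t^2) * v| ≤ KC n k r₀ C₀ := by
    rw [abs_mul, abs_of_nonneg (by positivity)]
    unfold KC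
    have h1 : (k:ℝ)*((k:ℝ)+(n:ℝ)-3)/t^2 ≤ (k:ℝ)*((k:ℝ)+(n:ℝ)-3)/(r₀/2)^2 :=
      div_le_div_of_nonneg_left hκ (by positivity) (by nlinarith)
    have h2 : (k:ℝ)*((k:ℝ)+(n:ℝ)-3)/(r₀/2)^2 = (k:ℝ)*((k:ℝ)+(n:ℝ)-3)*(2/r₀)^2 := by
      field_simp
    calc (k:ℝ)*((k:ℝ)+(n:ℝ)-3)/t^2 * |v| ≤ (k:ℝ)*((k:ℝ)+(n:ℝ)-3)/(r₀/2)^2 * C₀ := by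
          apply mul_le_mul h1 hV (abs_nonneg _) (by positivity)
      _ = (k:ℝ)*((k:ℝ)+(n:ℝ)-3)*(2/r₀)^2*C₀ := by rw [h2]
  have hμcv : muF n r₀ ε t * |((k:ℝ)*((k:ℝ)+(n:ℝ)-3)/t^2) * v| ≤
      KC n k r₀ C₀ * ε + KC n k r₀ C₀ * w ^ γ := by
    have hKC0 := KC_nonneg n k hn hk hr0 hC₀
    have hμX : muF n r₀ ε t ≤ X := by
      unfold muF
      rw [← hwdef, ← hXdef]
      calc t ^ ((n:ℝ)-2) * X ≤ 1 * X := mul_le_mul_of_nonneg_right ht2 hX0.le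
        _ = X := one_mul _
    calc muF n r₀ ε t * |((k:ℝ)*((k:ℝ)+(n:ℝ)-3)/t^2) * v| ≤ X * KC n k r₀ C₀ := by
          apply mul_le_mul hμX hcv (abs_nonneg _) hX0.le
      _ = KC n k r₀ C₀ * ε + KC n k r₀ C₀ * w ^ 2 := by rw [hXdef]; ring
      _ ≤ KC n k r₀ C₀ * ε + KC n k r₀ C₀ * w ^ γ := by nlinarith
  -- bound on μ' |a|
  have hA' : |a| * X ^ ((1:ℝ)/2) ≤ C₀ * w ^ γ := (le_div_iff₀ hXh0).mp hA
  have hμ'A : muF' n r₀ ε t * |a| ≤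
      (((n:ℝ)-2)*(2/r₀)*2*C₀ + 2*C₀) * w ^ γ := by
    unfold muF'
    rw [← hwdef, ← hXdef]
    have parta : ((n:ℝ)-2) * t ^ ((n:ℝ)-3) * X * |a| ≤ ((n:ℝ)-2)*(2/r₀)*2*(C₀ * w ^ γ) := by
      have hfac : ((n:ℝ)-2) * t ^ ((n:ℝ)-3) * X ^ ((1:ℝ)/2) ≤ ((n:ℝ)-2) * (2/r₀) * 2 := by
        apply mul_le_mul (mul_le_mul_of_nonneg_left ht3 (by linarith)) hXh2 hXh0.le
        exact mul_nonneg (by linarith) (by positivity)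
      calc ((n:ℝ)-2) * t ^ ((n:ℝ)-3) * X * |a|
          = (((n:ℝ)-2) * t ^ ((n:ℝ)-3) * X ^ ((1:ℝ)/2)) * (|a| * X ^ ((1:ℝ)/2)) := by
            linear_combination (-(((n:ℝ)-2) * t ^ ((n:ℝ)-3) * |a|)) * hXh
        _ ≤ (((n:ℝ)-2) * (2/r₀) * 2) * (C₀ * w ^ γ) := by
            apply mul_le_mul hfac hA' _ _
            · positivity
            · exact mul_nonneg (mul_nonneg (by linarith) (by positivity)) (by norm_num)
    have partb : t ^ ((n:ℝ)-2) * (2 * w) * |a| ≤ 2 * (C₀ * w ^ γ) := by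
      calc t ^ ((n:ℝ)-2) * (2 * w) * |a| ≤ 1 * (2 * X ^ ((1:ℝ)/2)) * |a| := by
            apply mul_le_mul_of_nonneg_right _ (abs_nonneg _)
            apply mul_le_mul ht2 (by linarith) (by positivity) (by norm_num)
        _ = 2 * (|a| * X ^ ((1:ℝ)/2)) := by ring
        _ ≤ 2 * (C₀ * w ^ γ) := by linarith
    calc (((n:ℝ)-2) * t ^ ((n:ℝ)-3) * X + t ^ ((n:ℝ)-2) * (2 * w)) * |a|
        = ((n:ℝ)-2) * t ^ ((n:ℝ)-3) * X * |a| + t ^ ((n:ℝ)-2) * (2 * w) * |a| := by ring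
      _ ≤ ((n:ℝ)-2)*(2/r₀)*2*(C₀ * w ^ γ) + 2 * (C₀ * w ^ γ) := by linarith
      _ = (((n:ℝ)-2)*(2/r₀)*2*C₀ + 2*C₀) * w ^ γ := by ring
  -- combine
  have hμ0 : 0 ≤ muF n r₀ ε t := by
    unfold muF; positivity
  have hμ'0 : 0 ≤ muF' n r₀ ε t := by
    unfold muF'
    apply add_nonneg
    · apply mul_nonneg (mul_nonneg (by linarith) (by positivity))
      rw [← hwdef, ← hXdef]; exact hX0.le
    · positivity
  have htri : |muF n r₀ ε t * (b + ((k:ℝ)*((k:ℝ)+(n:ℝ)-3)/t^2) * v) - muF' n r₀ ε t * a|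
      ≤ muF n r₀ ε t * |b| + muF n r₀ ε t * |((k:ℝ)*((k:ℝ)+(n:ℝ)-3)/t^2) * v|
        + muF' n r₀ ε t * |a| := by
    calc |muF n r₀ ε t * (b + ((k:ℝ)*((k:ℝ)+(n:ℝ)-3)/t^2) * v) - muF' n r₀ ε t * a|
        ≤ |muF n r₀ ε t * (b + ((k:ℝ)*((k:ℝ)+(n:ℝ)-3)/t^2) * v)| + |muF' n r₀ ε t * a| :=
          abs_sub _ _
      _ = muF n r₀ ε t * |b + ((k:ℝ)*((k:ℝ)+(n:ℝ)-3)/t^2) * v| + muF' n r₀ ε t * |a| := by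
          rw [abs_mul, abs_mul, abs_of_nonneg hμ0, abs_of_nonneg hμ'0]
      _ ≤ muF n r₀ ε t * (|b| + |((k:ℝ)*((k:ℝ)+(n:ℝ)-3)/t^2) * v|) + muF' n r₀ ε t * |a| := by
          have h5 := abs_add_le b (((k:ℝ)*((k:ℝ)+(n:ℝ)-3)/t^2) * v)
          have h6 := mul_le_mul_of_nonneg_left h5 hμ0
          linarith
      _ = muF n r₀ ε t * |b| + muF n r₀ ε t * |((k:ℝ)*((k:ℝ)+(n:ℝ)-3)/t^2) * v|
          + muF' n r₀ ε t * |a| := by ring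
  have hfinal := add_le_add (add_le_add hμB hμcv) hμ'A
  calc |muF n r₀ ε t * (b + ((k:ℝ)*((k:ℝ)+(n:ℝ)-3)/t^2) * v) - muF' n r₀ ε t * a|
      ≤ C₀ * w ^ γ + (KC n k r₀ C₀ * ε + KC n k r₀ C₀ * w ^ γ)
        + (((n:ℝ)-2)*(2/r₀)*2*C₀ + 2*C₀) * w ^ γ := le_trans htri hfinal
    _ = KC n k r₀ C₀ * ε + KH n k r₀ C₀ * w ^ γ := by unfold KH; ring

lemma contw (r₀ γ : ℝ) (hγ : 0 ≤ γ) : Continuous (fun t : ℝ => max (t - r₀) 0 ^ γ) :=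
  (Real.continuous_rpow_const hγ).comp ((continuous_id.sub continuous_const).max continuous_const)

lemma Jbound {r₀ γ s r : ℝ} (hγ0 : 0 < γ) (hsr : s ≤ r) (hsr₀ : s ≤ r₀) :
    ∫ t in s..r, max (t - r₀) 0 ^ γ ≤ max (r - r₀) 0 ^ γ * max (r - r₀) 0 := by
  have hc := contw r₀ γ hγ0.le
  by_cases hcase : r₀ ≤ r
  · have hint1 : IntervalIntegrable (fun t => max (t - r₀) 0 ^ γ) volume s r₀ :=
      hc.intervalIntegrable _ _
    have hint2 : IntervalIntegrable (fun t => max (t - r₀) 0 ^ γ) volume r₀ r :=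
      hc.intervalIntegrable _ _
    have hsplit := integral_add_adjacent_intervals hint1 hint2
    have h1 : ∫ t in s..r₀, max (t - r₀) 0 ^ γ = 0 := by
      have : EqOn (fun t => max (t - r₀) 0 ^ γ) (fun _ => (0:ℝ)) (uIcc s r₀) := by
        intro x hx
        rw [uIcc_of_le hsr₀] at hx
        simp only
        rw [max_eq_right (by linarith [hx.2] : x - r₀ ≤ 0), Real.zero_rpow hγ0.ne']
      rw [integral_congr this]
      simp
    have h2 : ∫ t in r₀..r, max (t - r₀) 0 ^ γ ≤ max (r - r₀) 0 ^ γ * (r - r₀) := by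
      have hm := integral_mono_on hcase hint2 (_root_.intervalIntegrable_const (c := max (r - r₀) 0 ^ γ))
        (fun x hx => Real.rpow_le_rpow (le_max_right _ _)
          (max_le_max (by linarith [hx.2]) le_rfl) hγ0.le)
      rwa [intervalIntegral.integral_const, smul_eq_mul, mul_comm] at hm
    have h4 : max (r - r₀) 0 ^ γ * (r - r₀) = max (r - r₀) 0 ^ γ * max (r - r₀) 0 := by
      rw [max_eq_left (by linarith : (0:ℝ) ≤ r - r₀)]
    rw [← hsplit, h1, zero_add]
    rw [h4] at h2
    exact h2
  · push_neg at hcase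
    have h0 : ∫ t in s..r, max (t - r₀) 0 ^ γ = 0 := by
      have : EqOn (fun t => max (t - r₀) 0 ^ γ) (fun _ => (0:ℝ)) (uIcc s r) := by
        intro x hx
        rw [uIcc_of_le hsr] at hx
        simp only
        rw [max_eq_right (by linarith [hx.2] : x - r₀ ≤ 0), Real.zero_rpow hγ0.ne']
      rw [integral_congr this]
      simp
    rw [h0]
    positivity


/-- Let `n ≥ 2`, `k ≥ 1`, `γ ∈ (0,1)`, `ε ∈ (0,1/4)`, `r₀ ∈ (0,1/2)`,
`C₀ > 0`. If `V ∈ C²((0,1)) ∩ C([0,1))` satisfies `V(0) = 0`, `|V| ≤ C₀`,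
`|V'(r₀/2)| ≤ C₀` and `V'' + b V' − (k(k+n−3)/r²) V = A' + B` on `(0,1)` with
`|A(r)| ≤ C₀ (r−r₀)₊^γ (ε+(r−r₀)₊²)^{−1/2}` and `|B(r)| ≤ C₀ (r−r₀)₊^γ (ε+(r−r₀)₊²)^{−1}`,
then `|V'(r)| ≤ C (ε + (r−r₀)₊²)^{(γ−1)/2}` on `[r₀/2, 1)`, where `C > 0` depends only on
`n`, `k`, `r₀`, `γ`, `C₀` (in particular `C` is independent of `ε`). -/
theorem stmt16 (n k : ℕ) (hn : 2 ≤ n) (hk : 1 ≤ k) (r₀ γ C₀ : ℝ)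
    (hr₀ : r₀ ∈ Ioo (0:ℝ) (1/2)) (hγ : γ ∈ Ioo (0:ℝ) 1) (hC₀ : 0 < C₀) :
    ∃ C : ℝ, 0 < C ∧
      ∀ ε : ℝ, ε ∈ Ioo (0:ℝ) (1/4) →
      ∀ V A B : ℝ → ℝ,
        ContinuousOn V (Ico 0 1) → V 0 = 0 →
        (∀ r ∈ Ioo (0:ℝ) 1, |V r| ≤ C₀) →
        (∀ r ∈ Ioo (0:ℝ) 1, DifferentiableAt ℝ V r) →
        (∀ r ∈ Ioo (0:ℝ) 1, DifferentiableAt ℝ (deriv V) r) →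
        ContinuousOn (deriv (deriv V)) (Ioo 0 1) →
        |deriv V (r₀/2)| ≤ C₀ →
        (∀ r ∈ Ioo (0:ℝ) 1, DifferentiableAt ℝ A r) →
        ContinuousOn (deriv A) (Ioo 0 1) →
        ContinuousOn B (Ioo 0 1) →
        (∀ r ∈ Ioo (0:ℝ) 1,
          |A r| ≤ C₀ * max (r - r₀) 0 ^ γ / (ε + max (r - r₀) 0 ^ 2) ^ ((1:ℝ)/2)) →
        (∀ r ∈ Ioo (0:ℝ) 1,
          |B r| ≤ C₀ * max (r - r₀) 0 ^ γ / (ε + max (r - r₀) 0 ^ 2)) →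
        (∀ r ∈ Ioo (0:ℝ) 1,
          deriv (deriv V) r + bCoeff n r₀ ε r * deriv V r -
            ((k : ℝ) * ((k : ℝ) + (n : ℝ) - 3) / r ^ 2) * V r = deriv A r + B r) →
        ∀ r ∈ Ico (r₀/2) 1,
          |deriv V r| ≤ C * (ε + max (r - r₀) 0 ^ 2) ^ ((γ - 1)/2) := by
  obtain ⟨hr0, hr1⟩ := hr₀
  obtain ⟨hg0, hg1⟩ := hγ
  have hn2 : (2:ℝ) ≤ (n:ℝ) := by exact_mod_cast hn
  have hs0 : (0:ℝ) < r₀/2 := by linarith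
  have hm0 : (0:ℝ) < (r₀/2) ^ ((n:ℝ)-2) := Real.rpow_pos_of_pos hs0 _
  have hKH := KH_pos n k hn hk hr0 hC₀
  have hKC := KC_nonneg n k hn hk hr0 hC₀
  have hKCH : KC n k r₀ C₀ ≤ KH n k r₀ C₀ := by
    have h2 : (0:ℝ) ≤ ((n:ℝ)-2)*(2/r₀)*2*C₀ :=
      mul_nonneg (mul_nonneg (mul_nonneg (by linarith) (by positivity)) (by norm_num)) hC₀.le
    unfold KH
    nlinarith
  refine ⟨C₀ + (2*(C₀ + KH n k r₀ C₀) + KH n k r₀ C₀) / ((r₀/2) ^ ((n:ℝ)-2)), ?_, ?_⟩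
  · have h1 : 0 ≤ (2*(C₀ + KH n k r₀ C₀) + KH n k r₀ C₀) / ((r₀/2) ^ ((n:ℝ)-2)) :=
      div_nonneg (by linarith) hm0.le
    linarith
  intro ε hε V A B hVc hV0 hVb hV1 hV2 hV2c hV's hA1 hA'c hBc hAb hBb hODE r hr
  obtain ⟨hε0, hε4⟩ := hε
  obtain ⟨hrs, hr1'⟩ := hr
  set s : ℝ := r₀/2 with hsdef
  set W : ℝ := max (r - r₀) 0 with hWdef
  set XR : ℝ := ε + W ^ 2 with hXRdef
  have hr0' : 0 < r := lt_of_lt_of_le hs0 hrs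
  have hsub : Icc s r ⊆ Ioo (0:ℝ) 1 := fun t ht =>
    ⟨lt_of_lt_of_le hs0 ht.1, lt_of_le_of_lt ht.2 hr1'⟩
  have hsler : s ≤ r := hrs
  -- derivative of g = μ (V' - A)
  have hgd : ∀ t ∈ Icc s r, HasDerivAt (fun u => muF n r₀ ε u * (deriv V u - A u))
      (muF n r₀ ε t * (B t + ((k:ℝ)*((k:ℝ)+(n:ℝ)-3)/t^2) * V t) - muF' n r₀ ε t * A t) t := by
    intro t ht
    have htI := hsub ht
    have ht0 : 0 < t := htI.1
    have hd1 := muF_hasDerivAt n r₀ ε ht0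
    have hd2 : HasDerivAt (deriv V) (deriv (deriv V) t) t := (hV2 t htI).hasDerivAt
    have hd3 : HasDerivAt A (deriv A t) t := (hA1 t htI).hasDerivAt
    have hprod := hd1.fun_mul (hd2.fun_sub hd3)
    have hXp : 0 < ε + max (t - r₀) 0 ^ 2 := by positivity
    have hb := muF'_eq n ht0 hXp
    have hode := hODE t htI
    refine hprod.congr_deriv ?_
    rw [hb]
    linear_combination (muF n r₀ ε t) * hode
  -- continuity of the integrand
  have hcont : ContinuousOn (fun t => muF n r₀ ε t * (B t + ((k:ℝ)*((k:ℝ)+(n:ℝ)-3)/t^2) * V t)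
      - muF' n r₀ ε t * A t) (Icc s r) := by
    have hμc : ContinuousOn (muF n r₀ ε) (Icc s r) := fun t ht =>
      ((muF_hasDerivAt n r₀ ε (hsub ht).1).continuousAt).continuousWithinAt
    have hμ'c : ContinuousOn (muF' n r₀ ε) (Icc s r) := by
      intro t ht
      apply ContinuousAt.continuousWithinAt
      have h1 : ContinuousAt (fun u:ℝ => u ^ ((n:ℝ)-3)) t :=
        Real.continuousAt_rpow_const _ _ (Or.inl (ne_of_gt (hsub ht).1))
      have h2 : ContinuousAt (fun u:ℝ => u ^ ((n:ℝ)-2)) t :=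
        Real.continuousAt_rpow_const _ _ (Or.inl (ne_of_gt (hsub ht).1))
      have h3 : Continuous (fun u:ℝ => ε + max (u - r₀) 0 ^ 2) :=
        continuous_const.add (((continuous_id.sub continuous_const).max continuous_const).pow 2)
      have h4 : Continuous (fun u:ℝ => 2 * max (u - r₀) 0) :=
        continuous_const.mul ((continuous_id.sub continuous_const).max continuous_const)
      exact ((continuousAt_const.mul h1).mul h3.continuousAt).add (h2.mul h4.continuousAt)
    have hVco : ContinuousOn V (Icc s r) := fun t ht =>
      ((hV1 t (hsub ht)).continuousAt).continuousWithinAt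
    have hAco : ContinuousOn A (Icc s r) := fun t ht =>
      ((hA1 t (hsub ht)).continuousAt).continuousWithinAt
    have hBco : ContinuousOn B (Icc s r) := hBc.mono hsub
    have hcco : ContinuousOn (fun t => (k:ℝ)*((k:ℝ)+(n:ℝ)-3)/t^2) (Icc s r) :=
      ContinuousOn.div continuousOn_const (continuous_pow 2).continuousOn
        (fun t ht => pow_ne_zero 2 (ne_of_gt (hsub ht).1))
    exact (hμc.mul (hBco.add (hcco.mul hVco))).sub (hμ'c.mul hAco)
  -- FTC
  have hftc : ∫ t in s..r, (muF n r₀ ε t * (B t + ((k:ℝ)*((k:ℝ)+(n:ℝ)-3)/t^2) * V t)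
      - muF' n r₀ ε t * A t)
      = muF n r₀ ε r * (deriv V r - A r) - muF n r₀ ε s * (deriv V s - A s) := by
    apply intervalIntegral.integral_eq_sub_of_hasDerivAt
    · intro t ht
      rw [uIcc_of_le hsler] at ht
      exact hgd t ht
    · apply ContinuousOn.intervalIntegrable
      rwa [uIcc_of_le hsler]
  -- pointwise bound
  have hptw : ∀ t ∈ Icc s r, |muF n r₀ ε t * (B t + ((k:ℝ)*((k:ℝ)+(n:ℝ)-3)/t^2) * V t)
      - muF' n r₀ ε t * A t| ≤ KC n k r₀ C₀ * ε + KH n k r₀ C₀ * max (t - r₀) 0 ^ γ := by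
    intro t ht
    have htI := hsub ht
    exact est_h n k hn hk hr0 hr1 hC₀ hg0 hg1 hε0 hε4 ht.1 htI.2
      (A t) (B t) (V t) (hAb t htI) (hBb t htI) (hVb t htI)
  -- integral bound
  have hφc : Continuous (fun t : ℝ => KC n k r₀ C₀ * ε + KH n k r₀ C₀ * max (t - r₀) 0 ^ γ) :=
    continuous_const.add (continuous_const.mul (contw r₀ γ hg0.le))
  have hnorm : |∫ t in s..r, (muF n r₀ ε t * (B t + ((k:ℝ)*((k:ℝ)+(n:ℝ)-3)/t^2) * V t)
      - muF' n r₀ ε t * A t)| ≤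
      |∫ t in s..r, (KC n k r₀ C₀ * ε + KH n k r₀ C₀ * max (t - r₀) 0 ^ γ)| := by
    have hae : ∀ᵐ t ∂(MeasureTheory.volume.restrict (Set.uIoc s r)),
        ‖muF n r₀ ε t * (B t + ((k:ℝ)*((k:ℝ)+(n:ℝ)-3)/t^2) * V t) - muF' n r₀ ε t * A t‖ ≤
          KC n k r₀ C₀ * ε + KH n k r₀ C₀ * max (t - r₀) 0 ^ γ := by
      apply (ae_restrict_iff' measurableSet_uIoc).mpr
      apply MeasureTheory.ae_of_all
      intro t ht
      rw [Real.norm_eq_abs]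
      apply hptw t
      rw [uIoc_of_le hsler] at ht
      exact Ioc_subset_Icc_self ht
    have := intervalIntegral.norm_integral_le_of_norm_le hsler
      (MeasureTheory.ae_of_all (MeasureTheory.volume : Measure ℝ) fun t ht => by
        rw [Real.norm_eq_abs]; exact hptw t (Ioc_subset_Icc_self ht)) (hφc.intervalIntegrable s r)
    rw [Real.norm_eq_abs] at this
    exact this.trans (le_abs_self _)
  have hIεJ : ∫ t in s..r, (KC n k r₀ C₀ * ε + KH n k r₀ C₀ * max (t - r₀) 0 ^ γ)
      = KC n k r₀ C₀ * ε * (r - s)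
        + KH n k r₀ C₀ * ∫ t in s..r, max (t - r₀) 0 ^ γ := by
    rw [intervalIntegral.integral_add (_root_.intervalIntegrable_const)
      ((continuous_const.fun_mul (contw r₀ γ hg0.le)).intervalIntegrable s r),
      intervalIntegral.integral_const, intervalIntegral.integral_const_mul]
    simp only [smul_eq_mul]
    ring
  have hJ : ∫ t in s..r, max (t - r₀) 0 ^ γ ≤ W ^ γ * W :=
    Jbound hg0 hsler (by rw [hsdef]; linarith)
  have hJnn : 0 ≤ ∫ t in s..r, max (t - r₀) 0 ^ γ :=
    intervalIntegral.integral_nonneg hsler (fun u _ => Real.rpow_nonneg (le_max_right _ _) γ)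
  have hW0 : 0 ≤ W := le_max_right _ _
  have hW1 : W ≤ 1 := max_le (by linarith) zero_le_one
  have hWγ0 : 0 ≤ W ^ γ := Real.rpow_nonneg hW0 γ
  have hInt : |∫ t in s..r, (muF n r₀ ε t * (B t + ((k:ℝ)*((k:ℝ)+(n:ℝ)-3)/t^2) * V t)
      - muF' n r₀ ε t * A t)| ≤ KC n k r₀ C₀ * ε + KH n k r₀ C₀ * (W ^ γ * W) := by
    have e1 : KC n k r₀ C₀ * ε * (r - s) ≤ KC n k r₀ C₀ * ε * 1 :=
      mul_le_mul_of_nonneg_left (by linarith) (mul_nonneg hKC hε0.le)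
    have e2 : KH n k r₀ C₀ * (∫ t in s..r, max (t - r₀) 0 ^ γ)
        ≤ KH n k r₀ C₀ * (W ^ γ * W) := mul_le_mul_of_nonneg_left hJ hKH.le
    have e3 : (0:ℝ) ≤ KC n k r₀ C₀ * ε * (r - s) :=
      mul_nonneg (mul_nonneg hKC hε0.le) (by linarith)
    have e4 : (0:ℝ) ≤ KH n k r₀ C₀ * ∫ t in s..r, max (t - r₀) 0 ^ γ :=
      mul_nonneg hKH.le hJnn
    calc |∫ t in s..r, (muF n r₀ ε t * (B t + ((k:ℝ)*((k:ℝ)+(n:ℝ)-3)/t^2) * V t)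
          - muF' n r₀ ε t * A t)|
        ≤ |∫ t in s..r, (KC n k r₀ C₀ * ε + KH n k r₀ C₀ * max (t - r₀) 0 ^ γ)| := hnorm
      _ = |KC n k r₀ C₀ * ε * (r - s)
          + KH n k r₀ C₀ * ∫ t in s..r, max (t - r₀) 0 ^ γ| := by rw [hIεJ]
      _ = KC n k r₀ C₀ * ε * (r - s)
          + KH n k r₀ C₀ * ∫ t in s..r, max (t - r₀) 0 ^ γ := abs_of_nonneg (by linarith)
      _ ≤ KC n k r₀ C₀ * ε + KH n k r₀ C₀ * (W ^ γ * W) := by nlinarith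
  -- value at s
  have hsI : s ∈ Ioo (0:ℝ) 1 := ⟨hs0, by rw [hsdef]; linarith⟩
  have hws : max (s - r₀) 0 = 0 := max_eq_right (by rw [hsdef]; linarith)
  have hAs : A s = 0 := by
    have h6 := hAb s hsI
    rw [hws, Real.zero_rpow hg0.ne'] at h6
    rw [mul_zero, zero_div] at h6
    exact abs_eq_zero.mp (le_antisymm h6 (abs_nonneg _))
  have hμs0 : 0 ≤ muF n r₀ ε s := by unfold muF; positivity
  have hμs : muF n r₀ ε s ≤ ε := by
    unfold muF
    rw [hws]
    norm_num
    calc s ^ ((n:ℝ)-2) * ε ≤ 1 * ε := by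
          apply mul_le_mul_of_nonneg_right _ hε0.le
          exact Real.rpow_le_one hs0.le (by rw [hsdef]; linarith) (by linarith)
      _ = ε := one_mul _
  have hgs : |muF n r₀ ε s * (deriv V s - A s)| ≤ ε * C₀ := by
    rw [hAs, sub_zero, abs_mul, abs_of_nonneg hμs0]
    exact mul_le_mul hμs hV's (abs_nonneg _) hε0.le
  -- combine FTC with bounds
  have hgr : |muF n r₀ ε r * (deriv V r - A r)| ≤
      (C₀ + KC n k r₀ C₀) * ε + KH n k r₀ C₀ * (W ^ γ * W) := by
    have heq : muF n r₀ ε r * (deriv V r - A r) = muF n r₀ ε s * (deriv V s - A s)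
        + ∫ t in s..r, (muF n r₀ ε t * (B t + ((k:ℝ)*((k:ℝ)+(n:ℝ)-3)/t^2) * V t)
          - muF' n r₀ ε t * A t) := by linarith [hftc]
    rw [heq]
    calc |muF n r₀ ε s * (deriv V s - A s)
          + ∫ t in s..r, (muF n r₀ ε t * (B t + ((k:ℝ)*((k:ℝ)+(n:ℝ)-3)/t^2) * V t)
            - muF' n r₀ ε t * A t)|
        ≤ |muF n r₀ ε s * (deriv V s - A s)|
          + |∫ t in s..r, (muF n r₀ ε t * (B t + ((k:ℝ)*((k:ℝ)+(n:ℝ)-3)/t^2) * V t)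
            - muF' n r₀ ε t * A t)| := abs_add_le _ _
      _ ≤ ε * C₀ + (KC n k r₀ C₀ * ε + KH n k r₀ C₀ * (W ^ γ * W)) := add_le_add hgs hInt
      _ = (C₀ + KC n k r₀ C₀) * ε + KH n k r₀ C₀ * (W ^ γ * W) := by ring
  -- lower bound for μ(r), and rpow estimates
  have hXR0 : 0 < XR := by rw [hXRdef]; positivity
  have hXR2 : XR ≤ 2 := by rw [hXRdef]; nlinarith
  have hμr : s ^ ((n:ℝ)-2) * XR ≤ muF n r₀ ε r := by
    unfold muF
    rw [← hWdef, ← hXRdef]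
    exact mul_le_mul_of_nonneg_right (Real.rpow_le_rpow hs0.le hrs (by linarith)) hXR0.le
  have hμr0 : 0 ≤ muF n r₀ ε r := by unfold muF; positivity
  have hP0 : 0 < XR ^ ((γ-1)/2) := Real.rpow_pos_of_pos hXR0 _
  have hP1 : 1 ≤ 2 * XR ^ ((γ-1)/2) := by
    have e1 : (2:ℝ) ^ ((γ-1)/2) ≤ XR ^ ((γ-1)/2) :=
      Real.rpow_le_rpow_of_nonpos hXR0 hXR2 (by linarith)
    have e2 : (2:ℝ) ^ (-1:ℝ) ≤ (2:ℝ) ^ ((γ-1)/2) :=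
      Real.rpow_le_rpow_of_exponent_le (by norm_num) (by linarith)
    rw [Real.rpow_neg_one] at e2
    norm_num at e2
    linarith
  have hW2XR : W ^ 2 ≤ XR := by rw [hXRdef]; linarith
  have hWγX : W ^ γ ≤ XR ^ (γ/2) := by
    have h1 : W ^ γ = (W ^ 2) ^ (γ/2) := by
      rw [← Real.rpow_natCast W 2, ← Real.rpow_mul hW0]
      congr 1
      push_cast
      ring
    rw [h1]
    exact Real.rpow_le_rpow (by positivity) hW2XR (by linarith)
  have hAr : |A r| ≤ C₀ * XR ^ ((γ-1)/2) := by
    have h7 : |A r| ≤ C₀ * W ^ γ / XR ^ ((1:ℝ)/2) := hAb r (hsub ⟨hrs, le_refl r⟩)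
    have hXh0' : (0:ℝ) < XR ^ ((1:ℝ)/2) := Real.rpow_pos_of_pos hXR0 _
    calc |A r| ≤ C₀ * W ^ γ / XR ^ ((1:ℝ)/2) := h7
      _ ≤ C₀ * XR ^ (γ/2) / XR ^ ((1:ℝ)/2) :=
          (div_le_div_iff_of_pos_right hXh0').mpr (mul_le_mul_of_nonneg_left hWγX hC₀.le)
      _ = C₀ * (XR ^ (γ/2) / XR ^ ((1:ℝ)/2)) := by ring
      _ = C₀ * XR ^ ((γ-1)/2) := by
          rw [← Real.rpow_sub hXR0]
          congr 1
          ring_nf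
  have hi3 : ε ≤ 2 * (XR * XR ^ ((γ-1)/2)) := by
    have h8 : ε * 1 ≤ XR * (2 * XR ^ ((γ-1)/2)) :=
      mul_le_mul (by rw [hXRdef]; nlinarith) hP1 zero_le_one hXR0.le
    nlinarith
  have hi4 : W ^ γ * W ≤ XR * XR ^ ((γ-1)/2) := by
    rcases eq_or_lt_of_le hW0 with h | h
    · rw [← h, Real.zero_rpow hg0.ne', mul_zero]
      positivity
    · have h1 : W ^ (γ+1) = W ^ γ * W := by
        have := Real.rpow_add h γ 1
        rwa [Real.rpow_one] at this
      have h2 : W ^ (γ+1) = (W ^ 2) ^ ((γ+1)/2) := by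
        rw [← Real.rpow_natCast W 2, ← Real.rpow_mul hW0]
        congr 1
        push_cast
        ring
      have h3 : (W ^ 2) ^ ((γ+1)/2) ≤ XR ^ ((γ+1)/2) :=
        Real.rpow_le_rpow (by positivity) hW2XR (by linarith)
      have h4 : XR ^ ((γ+1)/2) = XR * XR ^ ((γ-1)/2) := by
        rw [show (γ+1)/2 = 1 + (γ-1)/2 by ring, Real.rpow_add hXR0, Real.rpow_one]
      linarith
  -- conclude
  have hVAr : |deriv V r - A r| * (s ^ ((n:ℝ)-2) * XR) ≤
      (2*(C₀ + KH n k r₀ C₀) + KH n k r₀ C₀) * (XR * XR ^ ((γ-1)/2)) := by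
    have step1 : |deriv V r - A r| * (s ^ ((n:ℝ)-2) * XR) ≤ |muF n r₀ ε r * (deriv V r - A r)| := by
      rw [abs_mul, abs_of_nonneg hμr0]
      calc |deriv V r - A r| * (s ^ ((n:ℝ)-2) * XR) ≤ |deriv V r - A r| * muF n r₀ ε r :=
            mul_le_mul_of_nonneg_left hμr (abs_nonneg _)
        _ = muF n r₀ ε r * |deriv V r - A r| := mul_comm _ _
    have step2 : (C₀ + KC n k r₀ C₀) * ε ≤ (C₀ + KH n k r₀ C₀) * (2 * (XR * XR ^ ((γ-1)/2))) :=
      mul_le_mul (by linarith) hi3 hε0.le (by linarith)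
    have step3 : KH n k r₀ C₀ * (W ^ γ * W) ≤ KH n k r₀ C₀ * (XR * XR ^ ((γ-1)/2)) :=
      mul_le_mul_of_nonneg_left hi4 hKH.le
    calc |deriv V r - A r| * (s ^ ((n:ℝ)-2) * XR)
        ≤ |muF n r₀ ε r * (deriv V r - A r)| := step1
      _ ≤ (C₀ + KC n k r₀ C₀) * ε + KH n k r₀ C₀ * (W ^ γ * W) := hgr
      _ ≤ (C₀ + KH n k r₀ C₀) * (2 * (XR * XR ^ ((γ-1)/2)))
          + KH n k r₀ C₀ * (XR * XR ^ ((γ-1)/2)) := add_le_add step2 step3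
      _ = (2*(C₀ + KH n k r₀ C₀) + KH n k r₀ C₀) * (XR * XR ^ ((γ-1)/2)) := by ring
  have hm0' : (0:ℝ) < s ^ ((n:ℝ)-2) := Real.rpow_pos_of_pos hs0 _
  have hdiv : |deriv V r - A r| ≤
      ((2*(C₀ + KH n k r₀ C₀) + KH n k r₀ C₀) / s ^ ((n:ℝ)-2)) * XR ^ ((γ-1)/2) := by
    rw [div_mul_eq_mul_div, le_div_iff₀ hm0']
    apply le_of_mul_le_mul_right _ hXR0
    calc |deriv V r - A r| * s ^ ((n:ℝ)-2) * XR
        = |deriv V r - A r| * (s ^ ((n:ℝ)-2) * XR) := by ring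
      _ ≤ (2*(C₀ + KH n k r₀ C₀) + KH n k r₀ C₀) * (XR * XR ^ ((γ-1)/2)) := hVAr
      _ = (2*(C₀ + KH n k r₀ C₀) + KH n k r₀ C₀) * XR ^ ((γ-1)/2) * XR := by ring
  calc |deriv V r| = |(deriv V r - A r) + A r| := by congr 1; ring
    _ ≤ |deriv V r - A r| + |A r| := abs_add_le _ _
    _ ≤ ((2*(C₀ + KH n k r₀ C₀) + KH n k r₀ C₀) / s ^ ((n:ℝ)-2)) * XR ^ ((γ-1)/2)
        + C₀ * XR ^ ((γ-1)/2) := add_le_add hdiv hAr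
    _ = (C₀ + (2*(C₀ + KH n k r₀ C₀) + KH n k r₀ C₀) / s ^ ((n:ℝ)-2)) * XR ^ ((γ-1)/2) := by
        ring
end
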